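/- arXiv:1405.6607 — 5 statements merged into one kernel-verified Lean document; each statement's English description precedes it below -/
import Mathlib

section
/- Let n ≥ 2, let H be holomorphic on an open set U ⊆ ℂ^{n−1}, and let F be in standard form with non-cubic part H. Let A, B ∈ SL(2,ℂ). The function F^A is again in standard form (its non-cubic part being the sum of the Q-term (c_A/(8(c_Atⁿ+d_A)))(∑_{k=2}^{n−1}t^k t^{n+1−k})² and the transformed H-term), so (F^A)^B is defined. Then (F^A)^B = F^{AB}, where AB denotes the matrix product, at every point t ∈ ℂⁿ such that c_B tⁿ + d_B ≠ 0, c_{AB} tⁿ + d_{AB} ≠ 0, and (t²/(c_{AB}tⁿ+d_{AB}),…,t^{n−1}/(c_{AB}tⁿ+d_{AB}),(a_{AB}tⁿ+b_{AB})/(c_{AB}tⁿ+d_{AB})) ∈ U. In particular the assignment F ↦ F^A defines an action of SL(2,ℂ). -/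
open Finset

/-- The last coordinate index (1-based `n`). -/
def lastIdx (n : ℕ) (hn : 2 ≤ n) : Fin n := ⟨n - 1, by omega⟩

/-- The projection `t = (t¹,…,tⁿ) ↦ (t²,…,tⁿ)`. -/
def tailArg {n : ℕ} (t : Fin n → ℂ) : Fin (n - 1) → ℂ :=
  fun j => t ⟨(j : ℕ) + 1, by have := j.isLt; omega⟩

/-- The quadratic sum `∑_{i=2}^{n-1} tⁱ t^{n+1-i}` (1-based indexing). -/
noncomputable def midSum (n : ℕ) (hn : 2 ≤ n) (t : Fin n → ℂ) : ℂ :=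
  ∑ i : Fin n, if 1 ≤ (i : ℕ) ∧ (i : ℕ) ≤ n - 2 then t i * t ⟨n - 1 - (i : ℕ), by omega⟩ else 0

/-- A potential in standard form: `F(t) = ½(t¹)²tⁿ + ½t¹ ∑_{i=2}^{n-1} tⁱt^{n+1-i} + G(t²,…,tⁿ)`. -/
noncomputable def stdForm (n : ℕ) (hn : 2 ≤ n) (G : (Fin (n - 1) → ℂ) → ℂ) :
    (Fin n → ℂ) → ℂ :=
  fun t => 1 / 2 * (t ⟨0, by omega⟩) ^ 2 * t (lastIdx n hn)
    + 1 / 2 * t ⟨0, by omega⟩ * midSum n hn t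
    + G (tailArg t)

/-- The `SL(2,ℂ)`-transform of the non-cubic part: if `F` is in standard form with non-cubic
part `H(t²,…,tⁿ)`, then `F^A` is in standard form with non-cubic part `slH a b c d H`,
consisting of the Q-term `(c/(8(ctⁿ+d)))(∑_{k=2}^{n-1} tᵏt^{n+1-k})²` and the transformed
H-term `(ctⁿ+d)² H(t²/(ctⁿ+d),…,t^{n-1}/(ctⁿ+d),(atⁿ+b)/(ctⁿ+d))`.
Here `s : Fin (n-1) → ℂ` stands for the variables `(t²,…,tⁿ)`. -/
noncomputable def slH (n : ℕ) (hn : 2 ≤ n) (a b c d : ℂ)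
    (H : (Fin (n - 1) → ℂ) → ℂ) : (Fin (n - 1) → ℂ) → ℂ :=
  fun s =>
    c / (8 * (c * s ⟨n - 2, by omega⟩ + d)) *
      (∑ j : Fin (n - 1),
        if (j : ℕ) + 2 ≤ n - 1 then s j * s ⟨n - 3 - (j : ℕ), by omega⟩ else 0) ^ 2
    + (c * s ⟨n - 2, by omega⟩ + d) ^ 2 *
      H (fun j => if (j : ℕ) + 2 = n
          then (a * s ⟨n - 2, by omega⟩ + b) / (c * s ⟨n - 2, by omega⟩ + d)
          else s j / (c * s ⟨n - 2, by omega⟩ + d))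

/-- Auxiliary: the quadratic sum in the tail variables. -/
noncomputable def Qsum (n : ℕ) (hn : 2 ≤ n) (s : Fin (n - 1) → ℂ) : ℂ :=
  ∑ j : Fin (n - 1), if (j : ℕ) + 2 ≤ n - 1 then s j * s ⟨n - 3 - (j : ℕ), by omega⟩ else 0

/-- Auxiliary: the Möbius-transformed argument of `H`. -/
noncomputable def mobArg (n : ℕ) (hn : 2 ≤ n) (a b c d : ℂ) (s : Fin (n - 1) → ℂ) :
    Fin (n - 1) → ℂ := fun j =>
  if (j : ℕ) + 2 = n then (a * s ⟨n - 2, by omega⟩ + b) / (c * s ⟨n - 2, by omega⟩ + d)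
  else s j / (c * s ⟨n - 2, by omega⟩ + d)

lemma slH_eq (n : ℕ) (hn : 2 ≤ n) (a b c d : ℂ) (H : (Fin (n - 1) → ℂ) → ℂ)
    (s : Fin (n - 1) → ℂ) :
    slH n hn a b c d H s
      = c / (8 * (c * s ⟨n - 2, by omega⟩ + d)) * (Qsum n hn s) ^ 2
        + (c * s ⟨n - 2, by omega⟩ + d) ^ 2 * H (mobArg n hn a b c d s) := rfl

lemma mobArg_last (n : ℕ) (hn : 2 ≤ n) (a b c d : ℂ) (s : Fin (n - 1) → ℂ) :
    mobArg n hn a b c d s ⟨n - 2, by omega⟩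
      = (a * s ⟨n - 2, by omega⟩ + b) / (c * s ⟨n - 2, by omega⟩ + d) := by
  unfold mobArg
  rw [if_pos]
  show n - 2 + 2 = n
  omega

lemma Qsum_mobArg (n : ℕ) (hn : 2 ≤ n) (a b c d : ℂ) (s : Fin (n - 1) → ℂ) :
    Qsum n hn (mobArg n hn a b c d s)
      = Qsum n hn s / (c * s ⟨n - 2, by omega⟩ + d) ^ 2 := by
  unfold Qsum mobArg
  rw [Finset.sum_div]
  refine Finset.sum_congr rfl fun j _ => ?_
  by_cases h : (j : ℕ) + 2 ≤ n - 1
  · rw [if_pos h, if_pos h, if_neg (by omega), if_neg (by simp; omega)]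
    field_simp
  · rw [if_neg h, if_neg h, zero_div]

lemma mobArg_comp (n : ℕ) (hn : 2 ≤ n) (aA bA cA dA aB bB cB dB : ℂ)
    (s : Fin (n - 1) → ℂ)
    (h1 : cB * s ⟨n - 2, by omega⟩ + dB ≠ 0)
    (h2 : (cA * aB + dA * cB) * s ⟨n - 2, by omega⟩ + (cA * bB + dA * dB) ≠ 0) :
    mobArg n hn aA bA cA dA (mobArg n hn aB bB cB dB s)
      = mobArg n hn (aA * aB + bA * cB) (aA * bB + bA * dB)
          (cA * aB + dA * cB) (cA * bB + dA * dB) s := by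
  have hq : cA * ((aB * s ⟨n - 2, by omega⟩ + bB) / (cB * s ⟨n - 2, by omega⟩ + dB)) + dA
      = ((cA * aB + dA * cB) * s ⟨n - 2, by omega⟩ + (cA * bB + dA * dB))
        / (cB * s ⟨n - 2, by omega⟩ + dB) := by
    rw [eq_div_iff h1, add_mul, mul_assoc, div_mul_cancel₀ _ h1]; ring
  funext j
  rw [show mobArg n hn aA bA cA dA (mobArg n hn aB bB cB dB s) j
      = if (j : ℕ) + 2 = n
        then (aA * mobArg n hn aB bB cB dB s ⟨n - 2, by omega⟩ + bA)
          / (cA * mobArg n hn aB bB cB dB s ⟨n - 2, by omega⟩ + dA)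
        else mobArg n hn aB bB cB dB s j
          / (cA * mobArg n hn aB bB cB dB s ⟨n - 2, by omega⟩ + dA) from rfl,
    mobArg_last, hq]
  by_cases h : (j : ℕ) + 2 = n
  · rw [if_pos h]
    simp only [mobArg, if_pos h]
    rw [div_div_eq_mul_div, add_mul, mul_assoc, div_mul_cancel₀ _ h1]
    congr 1
    ring
  · rw [if_neg h]
    simp only [mobArg, if_neg h]
    rw [div_div_div_cancel_right₀]
    exact h1

lemma slH_comp (n : ℕ) (hn : 2 ≤ n) (aA bA cA dA aB bB cB dB : ℂ)
    (hB : aB * dB - bB * cB = 1) (H : (Fin (n - 1) → ℂ) → ℂ)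
    (s : Fin (n - 1) → ℂ)
    (h1 : cB * s ⟨n - 2, by omega⟩ + dB ≠ 0)
    (h2 : (cA * aB + dA * cB) * s ⟨n - 2, by omega⟩ + (cA * bB + dA * dB) ≠ 0) :
    slH n hn aB bB cB dB (slH n hn aA bA cA dA H) s
      = slH n hn (aA * aB + bA * cB) (aA * bB + bA * dB)
          (cA * aB + dA * cB) (cA * bB + dA * dB) H s := by
  have hq : cA * ((aB * s ⟨n - 2, by omega⟩ + bB) / (cB * s ⟨n - 2, by omega⟩ + dB)) + dA
      = ((cA * aB + dA * cB) * s ⟨n - 2, by omega⟩ + (cA * bB + dA * dB))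
        / (cB * s ⟨n - 2, by omega⟩ + dB) := by
    rw [eq_div_iff h1, add_mul, mul_assoc, div_mul_cancel₀ _ h1]; ring
  rw [slH_eq, slH_eq, slH_eq, mobArg_last, hq, Qsum_mobArg,
    mobArg_comp n hn aA bA cA dA aB bB cB dB s h1 h2]
  generalize hsn : s ⟨n - 2, by omega⟩ = sn at h1 h2 ⊢
  have h8 : (8 : ℂ) ≠ 0 := by norm_num
  field_simp
  have h2' : sn * (cA * aB + cB * dA) + (cA * bB + dB * dA) ≠ 0 := by
    intro h; apply h2; linear_combination h
  rw [eq_div_iff h2', add_mul, div_mul_cancel₀ _ h2']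
  linear_combination (-cA * Qsum n hn s ^ 2) * hB

/-- `(F^A)^B = F^{AB}`: the `SL(2,ℂ)`-transformation of Frobenius potentials in standard form
is an action.  Here `A = ((aA,bA),(cA,dA))`, `B = ((aB,bB),(cB,dB))` are in `SL(2,ℂ)` and
`AB` is the matrix product, and the equality holds at every `t` with `c_B tⁿ + d_B ≠ 0`,
`c_{AB} tⁿ + d_{AB} ≠ 0` and the `AB`-transformed argument in the domain `U` of `H`. -/
theorem slTransform_is_action (n : ℕ) (hn : 2 ≤ n)
    (U : Set (Fin (n - 1) → ℂ)) (hU : IsOpen U)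
    (H : (Fin (n - 1) → ℂ) → ℂ) (hH : DifferentiableOn ℂ H U)
    (aA bA cA dA aB bB cB dB : ℂ)
    (hA : aA * dA - bA * cA = 1) (hB : aB * dB - bB * cB = 1) :
    ∀ t : Fin n → ℂ,
      cB * t (lastIdx n hn) + dB ≠ 0 →
      (cA * aB + dA * cB) * t (lastIdx n hn) + (cA * bB + dA * dB) ≠ 0 →
      (fun j : Fin (n - 1) => if (j : ℕ) + 2 = n
          then ((aA * aB + bA * cB) * t (lastIdx n hn) + (aA * bB + bA * dB)) /
            ((cA * aB + dA * cB) * t (lastIdx n hn) + (cA * bB + dA * dB))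
          else t ⟨(j : ℕ) + 1, by have := j.isLt; omega⟩ /
            ((cA * aB + dA * cB) * t (lastIdx n hn) + (cA * bB + dA * dB))) ∈ U →
      stdForm n hn (slH n hn aB bB cB dB (slH n hn aA bA cA dA H)) t
        = stdForm n hn (slH n hn (aA * aB + bA * cB) (aA * bB + bA * dB)
            (cA * aB + dA * cB) (cA * bB + dA * dB) H) t := by
  intro t h1 h2 _
  have ht : tailArg t ⟨n - 2, by omega⟩ = t (lastIdx n hn) := by
    unfold tailArg lastIdx
    congr 1
    exact Fin.ext (by simp; omega)
  simp only [stdForm]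
  congr 1
  exact slH_comp n hn aA bA cA dA aB bB cB dB hB H (tailArg t)
    (by rw [ht]; exact h1) (by rw [ht]; exact h2)
end

section
/- For all integers n ≥ p ≥ 1, the number of cyclic compositions of n into p parts is Cy(n,p) = (1/n)·∑_{a | gcd(n,p)} φ(a)·C(n/a, p/a), where φ is Euler's totient function, C(·,·) is the binomial coefficient, and the sum runs over the positive divisors a of gcd(n,p). -/
/-- `f : Fin p → ℕ` is a composition of `n` into `p` (positive) parts. -/
def IsComp (n p : ℕ) (f : Fin p → ℕ) : Prop :=
  (∀ i, 1 ≤ f i) ∧ ∑ i, f i = n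

/-- The orbit of `f : Fin p → ℕ` under the rotation action of `ℤ/pℤ`. -/
def orbitOf {p : ℕ} (f : Fin p → ℕ) : Set (Fin p → ℕ) :=
  {g | ∃ k : Fin p, g = fun i => f (i + k)}

/-- The set of cyclic compositions of `n` into `p` parts, i.e. of rotation-orbits of
compositions of `n` into `p` parts. -/
def cycSet (n p : ℕ) : Set (Set (Fin p → ℕ)) :=
  {S | ∃ f : Fin p → ℕ, IsComp n p f ∧ S = orbitOf f}

/-- `Cy n p`: the number of cyclic compositions of `n` into `p` parts. -/
noncomputable def Cy (n p : ℕ) : ℕ := (cycSet n p).ncard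

/-- `CyPrim n p`: the number of primitive cyclic compositions of `n` into `p` parts,
i.e. of rotation-orbits with exactly `p` elements. -/
noncomputable def CyPrim (n p : ℕ) : ℕ :=
  {S | ∃ f : Fin p → ℕ, IsComp n p f ∧ S = orbitOf f ∧ S.ncard = p}.ncard

/-- The order of the (common) rotation-stabilizer of the elements of `S`. -/
noncomputable def stabOrd {p : ℕ} (S : Set (Fin p → ℕ)) : ℕ :=
  {k : Fin p | ∀ f ∈ S, (fun i => f (i + k)) = f}.ncard

namespace CyAux

open Fin.NatCast Fin.CommRing

abbrev Comp (n p : ℕ) := {f : Fin p → ℕ // IsComp n p f}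

lemma le_of_isComp {n p : ℕ} {f : Fin p → ℕ} (hf : IsComp n p f) (i : Fin p) : f i ≤ n := by
  rw [← hf.2]
  exact Finset.single_le_sum (fun _ _ => Nat.zero_le _) (Finset.mem_univ i)

instance (n p : ℕ) : Finite (Comp n p) := by
  apply Finite.of_injective
    (fun f : Comp n p => (fun i => (⟨f.1 i, Nat.lt_succ_of_le (le_of_isComp f.2 i)⟩ : Fin (n+1))))
  intro f g h
  apply Subtype.ext; funext i
  exact congrArg Fin.val (congrFun h i)

variable {n p : ℕ} [NeZero p]

instance : AddAction (Fin p) (Comp n p) where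
  vadd k f := ⟨fun i => f.1 (i + k),
    ⟨fun i => f.2.1 _,
      (Fintype.sum_equiv (Equiv.addRight k) _ _ (fun _ => rfl)).trans f.2.2⟩⟩
  zero_vadd f := by apply Subtype.ext; funext i; show f.1 (i + 0) = f.1 i; rw [add_zero]
  add_vadd k l f := by
    apply Subtype.ext; funext i
    show f.1 (i + (k + l)) = f.1 (i + k + l)
    rw [add_assoc]

lemma vadd_apply (k : Fin p) (f : Comp n p) (i : Fin p) : (k +ᵥ f).1 i = f.1 (i + k) := rfl

lemma orbitOf_rot (f : Fin p → ℕ) (k : Fin p) : orbitOf (fun i => f (i + k)) = orbitOf f := by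
  ext g
  constructor
  · rintro ⟨l, rfl⟩
    exact ⟨k + l, by funext i; simp [add_assoc, add_comm l k]⟩
  · rintro ⟨m, rfl⟩
    exact ⟨m - k, by funext i; simp [add_assoc]⟩

lemma mem_orbitOf_self (f : Fin p → ℕ) : f ∈ orbitOf f :=
  ⟨0, by funext i; rw [add_zero]⟩

lemma cy_eq_card_quot : Cy n p = Nat.card (Quotient (AddAction.orbitRel (Fin p) (Comp n p))) := by
  rw [Cy, ← Nat.card_coe_set_eq]
  refine (Nat.card_eq_of_bijective
    (Quotient.lift (fun f : Comp n p => (⟨orbitOf f.1, ⟨f.1, f.2, rfl⟩⟩ : cycSet n p)) ?_) ?_).symm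
  · intro f g hfg
    have := AddAction.orbitRel_apply.1 hfg
    obtain ⟨k, rfl⟩ := AddAction.mem_orbit_iff.1 this
    exact Subtype.ext (orbitOf_rot g.1 k)
  · constructor
    · refine Quotient.ind fun f => Quotient.ind fun g h => ?_
      have h' : orbitOf f.1 = orbitOf g.1 := congrArg Subtype.val h
      have : f.1 ∈ orbitOf g.1 := h' ▸ mem_orbitOf_self f.1
      obtain ⟨k, hk⟩ := this
      refine Quotient.sound (AddAction.orbitRel_apply.2 (AddAction.mem_orbit_iff.2 ⟨k, ?_⟩))
      exact Subtype.ext hk.symm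
    · rintro ⟨S, f, hf, rfl⟩
      exact ⟨⟦⟨f, hf⟩⟧, rfl⟩

/-- The subgroup of periods of `f`. -/
def perSub (f : Fin p → ℕ) : AddSubgroup (Fin p) where
  carrier := {x | ∀ i, f (i + x) = f i}
  zero_mem' := fun i => by rw [add_zero]
  add_mem' := by
    intro x y hx hy i
    rw [← add_assoc, hy, hx]
  neg_mem' := by
    intro x hx i
    have := hx (i + -x)
    rw [neg_add_cancel_right] at this
    exact this.symm

lemma natCast_self_mem (S : AddSubgroup (Fin p)) : ((p : ℕ) : Fin p) ∈ S := by
  have : ((p : ℕ) : Fin p) = 0 := by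
    apply Fin.ext
    simp [Fin.val_natCast]
  rw [this]; exact S.zero_mem

lemma gcd_mem (S : AddSubgroup (Fin p)) :
    ∀ a b : ℕ, (a : Fin p) ∈ S → (b : Fin p) ∈ S → ((Nat.gcd a b : ℕ) : Fin p) ∈ S := by
  intro a
  induction a using Nat.strong_induction_on with
  | _ a ih =>
    intro b ha hb
    rcases Nat.eq_zero_or_pos a with rfl | hpos
    · simpa [Nat.gcd_zero_left] using hb
    · rw [Nat.gcd_rec a b]
      refine ih (b % a) (Nat.mod_lt b hpos) a ?_ ha
      have hcast : ((b % a : ℕ) : Fin p) = (b : Fin p) - (b / a : ℕ) * (a : Fin p) := by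
        have hb' : b = a * (b / a) + b % a := (Nat.div_add_mod b a).symm
        have : ((b : ℕ) : Fin p) = (a : Fin p) * (b / a : ℕ) + ((b % a : ℕ) : Fin p) := by
          conv_lhs => rw [hb']
          push_cast
          ring
        rw [this]; ring
      rw [hcast]
      refine AddSubgroup.sub_mem S hb ?_
      have : ((b / a : ℕ) : Fin p) * (a : Fin p) = (b / a) • ((a : ℕ) : Fin p) := by
        rw [nsmul_eq_mul]
      rw [this]
      exact AddSubgroup.nsmul_mem S ha _

lemma fix_iff_gcd (f : Fin p → ℕ) (k : Fin p) :
    k ∈ perSub f ↔ ((Nat.gcd k.1 p : ℕ) : Fin p) ∈ perSub f := by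
  constructor
  · intro hk
    exact gcd_mem (perSub f) k.1 p (by rwa [Fin.cast_val_eq_self]) (natCast_self_mem _)
  · intro hd
    have hk : k = ((Nat.gcd k.1 p * (k.1 / Nat.gcd k.1 p) : ℕ) : Fin p) := by
      rw [Nat.mul_div_cancel' (Nat.gcd_dvd_left k.1 p), Fin.cast_val_eq_self]
    rw [hk]
    push_cast
    rw [show ((Nat.gcd k.1 p : ℕ) : Fin p) * ((k.1 / Nat.gcd k.1 p : ℕ) : Fin p)
        = (k.1 / Nat.gcd k.1 p) • ((Nat.gcd k.1 p : ℕ) : Fin p) by rw [nsmul_eq_mul]; ring]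
    exact AddSubgroup.nsmul_mem _ hd _

lemma per_val {f : Fin p → ℕ} {d : ℕ} (hd : d ∣ p) (hd0 : 0 < d)
    (h : ∀ i, f (i + (d : Fin p)) = f i) :
    ∀ a (ha : a < p), f ⟨a, ha⟩ = f ⟨a % d, lt_of_lt_of_le (Nat.mod_lt a hd0)
      (Nat.le_of_dvd (Nat.pos_of_ne_zero (NeZero.ne p)) hd)⟩ := by
  intro a
  induction a using Nat.strong_induction_on with
  | _ a ih =>
    intro ha
    rcases lt_or_ge a d with h1 | h1
    · congr 1
      exact Fin.ext (Nat.mod_eq_of_lt h1).symm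
    · have hdp : d < p := lt_of_le_of_lt h1 ha
      have hsub : a - d < p := lt_of_le_of_lt (Nat.sub_le a d) ha
      have key : (⟨a - d, hsub⟩ : Fin p) + (d : Fin p) = ⟨a, ha⟩ := by
        apply Fin.ext
        rw [Fin.add_def]
        simp only [Fin.val_natCast]
        rw [Nat.mod_eq_of_lt hdp, Nat.sub_add_cancel h1, Nat.mod_eq_of_lt ha]
      have := h ⟨a - d, hsub⟩
      rw [key] at this
      rw [this, ih (a - d) (by omega) hsub]
      congr 1
      apply Fin.ext
      show (a - d) % d = a % d
      conv_rhs => rw [← Nat.sub_add_cancel h1, Nat.add_mod_right]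

lemma sum_period (G : ℕ → ℕ) {d : ℕ} (hG : ∀ a, G a = G (a % d)) :
    ∀ e : ℕ, ∑ a ∈ Finset.range (e * d), G a = e * ∑ a ∈ Finset.range d, G a := by
  intro e
  induction e with
  | zero => simp
  | succ e ih =>
    rw [Nat.succ_mul, Finset.sum_range_add, ih, Nat.succ_mul]
    congr 1
    refine Finset.sum_congr rfl fun a ha => ?_
    rw [hG (e * d + a), Nat.add_comm (e * d) a, Nat.add_mul_mod_self_right, ← hG a]

lemma sum_of_per {f : Fin p → ℕ} {d : ℕ} (hd : d ∣ p) (hd0 : 0 < d)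
    (hper : ∀ (a : ℕ) (ha : a < p), f ⟨a, ha⟩ =
      f ⟨a % d, lt_of_lt_of_le (Nat.mod_lt a hd0)
        (Nat.le_of_dvd (Nat.pos_of_ne_zero (NeZero.ne p)) hd)⟩) :
    ∑ i, f i = (p / d) * ∑ j : Fin d,
      f ⟨j.1, lt_of_lt_of_le j.2 (Nat.le_of_dvd (Nat.pos_of_ne_zero (NeZero.ne p)) hd)⟩ := by
  have hdp : d ≤ p := Nat.le_of_dvd (Nat.pos_of_ne_zero (NeZero.ne p)) hd
  set G : ℕ → ℕ := fun a => f ⟨a % d, lt_of_lt_of_le (Nat.mod_lt a hd0) hdp⟩ with hGdef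
  have hG : ∀ a, G a = G (a % d) := by
    intro a
    show f _ = f _
    congr 1
    exact Fin.ext (Nat.mod_mod_of_dvd a (dvd_refl d)).symm
  have h1 : ∑ i, f i = ∑ i : Fin p, G i.1 := by
    refine Finset.sum_congr rfl fun i _ => ?_
    have := hper i.1 i.2
    simpa using this
  rw [h1, Fin.sum_univ_eq_sum_range G p]
  have hstep : ∑ a ∈ Finset.range p, G a = ∑ a ∈ Finset.range ((p / d) * d), G a := by
    rw [Nat.div_mul_cancel hd]
  rw [hstep, sum_period G hG (p / d)]
  congr 1
  rw [← Fin.sum_univ_eq_sum_range G d]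
  refine Finset.sum_congr rfl fun j _ => ?_
  show f _ = f _
  congr 1
  exact Fin.ext (Nat.mod_eq_of_lt j.2)

lemma card_sum_eq (d m : ℕ) :
    Nat.card {h : Fin d → ℕ // ∑ i, h i = m} = (d + m - 1).choose m := by
  have e := Sym.equivNatSumOfFintype (Fin d) m
  rw [← Nat.card_congr e, Nat.card_eq_fintype_card, Sym.card_sym_eq_multichoose,
    Nat.multichoose_eq, Fintype.card_fin]

lemma card_comp (m d : ℕ) (hm : 1 ≤ m) (hd : 1 ≤ d) :
    Nat.card (Comp m d) = (m - 1).choose (d - 1) := by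
  rcases lt_or_ge m d with h | h
  · have : IsEmpty (Comp m d) := by
      constructor
      rintro ⟨f, hf1, hf2⟩
      have : d ≤ m := by
        calc d = ∑ _i : Fin d, 1 := by simp
        _ ≤ ∑ i, f i := Finset.sum_le_sum fun i _ => hf1 i
        _ = m := hf2
      omega
    rw [Nat.card_of_isEmpty]
    rw [Nat.choose_eq_zero_of_lt (by omega)]
  · have e : Comp m d ≃ {h : Fin d → ℕ // ∑ i, h i = m - d} := by
      refine ⟨fun f => ⟨fun i => f.1 i - 1, ?_⟩,
        fun h => ⟨fun i => h.1 i + 1, ⟨fun i => Nat.le_add_left 1 _, ?_⟩⟩, fun f => ?_, fun h => ?_⟩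
      · have hs : ∑ i, (f.1 i - 1) + d = m := by
          calc ∑ i, (f.1 i - 1) + d = ∑ i, (f.1 i - 1) + ∑ _i : Fin d, 1 := by simp
          _ = ∑ i, (f.1 i - 1 + 1) := by rw [← Finset.sum_add_distrib]
          _ = ∑ i, f.1 i := Finset.sum_congr rfl fun i _ => Nat.sub_add_cancel (f.2.1 i)
          _ = m := f.2.2
        show (∑ i, (f.1 i - 1)) = m - d
        omega
      · show (∑ i, (h.1 i + 1)) = m
        calc ∑ i, (h.1 i + 1) = ∑ i, h.1 i + ∑ _i : Fin d, 1 := Finset.sum_add_distrib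
        _ = (m - d) + d := by rw [h.2]; simp
        _ = m := by omega
      · apply Subtype.ext; funext i
        have := f.2.1 i
        show f.1 i - 1 + 1 = f.1 i
        omega
      · apply Subtype.ext; funext i
        show h.1 i + 1 - 1 = h.1 i
        omega
    rw [Nat.card_congr e, card_sum_eq]
    have h1 : d + (m - d) - 1 = m - 1 := by omega
    rw [h1]
    have h2 : m - d = (m - 1) - (d - 1) := by omega
    rw [h2, Nat.choose_symm (by omega)]

lemma card_per_comp (hn : 1 ≤ n) {d : ℕ} (hd : d ∣ p) (hd0 : 0 < d) :
    Nat.card {F : Comp n p // ∀ i, F.1 (i + (d : Fin p)) = F.1 i} =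
      if (p / d) ∣ n then (n / (p / d) - 1).choose (d - 1) else 0 := by
  have hp0 : 0 < p := Nat.pos_of_ne_zero (NeZero.ne p)
  have hdp : d ≤ p := Nat.le_of_dvd hp0 hd
  have he0 : 0 < p / d := Nat.div_pos hdp hd0
  have sum_dec : ∀ F : Comp n p, (∀ i, F.1 (i + (d : Fin p)) = F.1 i) →
      n = (p / d) * ∑ j : Fin d, F.1 ⟨j.1, lt_of_lt_of_le j.2 hdp⟩ := by
    intro F hF
    calc n = ∑ i, F.1 i := F.2.2.symm
    _ = _ := sum_of_per hd hd0 (per_val hd hd0 hF)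
  by_cases hdvd : (p / d) ∣ n
  · rw [if_pos hdvd]
    set m := n / (p / d) with hmdef
    have hnm : n = (p / d) * m := (Nat.mul_div_cancel' hdvd).symm
    have hm : 1 ≤ m := by
      rcases Nat.eq_zero_or_pos m with h | h
      · rw [h, Nat.mul_zero] at hnm; omega
      · exact h
    have key_per : ∀ (g : Fin d → ℕ) (i : Fin p),
        ((fun i : Fin p => g ⟨i.1 % d, Nat.mod_lt _ hd0⟩) (i + (d : Fin p)))
          = g ⟨i.1 % d, Nat.mod_lt _ hd0⟩ := by
      intro g i
      show g _ = g _
      congr 1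
      apply Fin.ext
      show ((i.1 + (d : Fin p).1) % p) % d = i.1 % d
      rw [Nat.mod_mod_of_dvd _ hd]
      have : d ∣ (d : Fin p).1 := by
        rw [Fin.val_natCast]
        exact (Nat.dvd_mod_iff hd).2 (dvd_refl d)
      obtain ⟨t, ht⟩ := this
      rw [ht, Nat.add_mul_mod_self_left]
    have e : {F : Comp n p // ∀ i, F.1 (i + (d : Fin p)) = F.1 i} ≃ Comp m d := by
      refine ⟨fun F => ⟨fun j => F.1.1 ⟨j.1, lt_of_lt_of_le j.2 hdp⟩,
          ⟨fun j => F.1.2.1 _, ?_⟩⟩,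
        fun g => ⟨⟨fun i => g.1 ⟨i.1 % d, Nat.mod_lt _ hd0⟩, ⟨fun i => g.2.1 _, ?_⟩⟩,
          key_per g.1⟩,
        fun F => ?_, fun g => ?_⟩
      · have h1 := sum_dec F.1 F.2
        exact Nat.eq_of_mul_eq_mul_left he0 (h1.symm.trans hnm)
      · have hper : ∀ (a : ℕ) (ha : a < p),
            (fun i : Fin p => g.1 ⟨i.1 % d, Nat.mod_lt _ hd0⟩) ⟨a, ha⟩ =
            (fun i : Fin p => g.1 ⟨i.1 % d, Nat.mod_lt _ hd0⟩)
              ⟨a % d, lt_of_lt_of_le (Nat.mod_lt a hd0) hdp⟩ := by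
          intro a ha
          show g.1 _ = g.1 _
          exact congrArg g.1 (Fin.ext (Nat.mod_mod_of_dvd a (dvd_refl d)).symm)
        have := sum_of_per (f := fun i : Fin p => g.1 ⟨i.1 % d, Nat.mod_lt _ hd0⟩) hd hd0 hper
        rw [this]
        have : ∑ j : Fin d, g.1 ⟨(⟨j.1, lt_of_lt_of_le j.2 hdp⟩ : Fin p).1 % d, Nat.mod_lt _ hd0⟩
            = ∑ j : Fin d, g.1 j := by
          refine Finset.sum_congr rfl fun j _ =>
            congrArg g.1 (Fin.ext (Nat.mod_eq_of_lt j.2))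
        rw [this, g.2.2, ← hnm]
      · apply Subtype.ext; apply Subtype.ext; funext i
        show F.1.1 ⟨i.1 % d, _⟩ = F.1.1 i
        have := per_val hd hd0 F.2 i.1 i.2
        simpa using this.symm
      · apply Subtype.ext; funext j
        show g.1 ⟨j.1 % d, _⟩ = g.1 j
        exact congrArg g.1 (Fin.ext (Nat.mod_eq_of_lt j.2))
    rw [Nat.card_congr e, card_comp m d hm hd0]
  · rw [if_neg hdvd]
    have : IsEmpty {F : Comp n p // ∀ i, F.1 (i + (d : Fin p)) = F.1 i} := by
      constructor
      rintro ⟨F, hF⟩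
      exact hdvd ⟨_, sum_dec F hF⟩
    exact Nat.card_of_isEmpty

lemma card_fixedBy (hn : 1 ≤ n) (k : Fin p) :
    Nat.card (AddAction.fixedBy (Comp n p) k) =
      if (p / Nat.gcd k.1 p) ∣ n then
        (n / (p / Nat.gcd k.1 p) - 1).choose (Nat.gcd k.1 p - 1) else 0 := by
  have hp0 : 0 < p := Nat.pos_of_ne_zero (NeZero.ne p)
  have hd : Nat.gcd k.1 p ∣ p := Nat.gcd_dvd_right _ _
  have hd0 : 0 < Nat.gcd k.1 p := Nat.gcd_pos_of_pos_right _ hp0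
  rw [← card_per_comp hn hd hd0]
  apply Nat.card_congr
  refine Equiv.subtypeEquivRight fun F => ?_
  rw [AddAction.mem_fixedBy]
  have h1 : (k +ᵥ F = F) ↔ (∀ i, F.1 (i + k) = F.1 i) := by
    rw [Subtype.ext_iff, funext_iff]
    exact Iff.rfl
  rw [h1]
  exact fix_iff_gcd F.1 k

lemma burnside :
    (∑ k : Fin p, Nat.card (AddAction.fixedBy (Comp n p) k)) = Cy n p * p := by
  classical
  haveI : Fintype (Comp n p) := Fintype.ofFinite _
  haveI : ∀ k : Fin p, Fintype (AddAction.fixedBy (Comp n p) k) := fun k => Fintype.ofFinite _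
  haveI : Fintype (Quotient (AddAction.orbitRel (Fin p) (Comp n p))) := Fintype.ofFinite _
  have hb := AddAction.sum_card_fixedBy_eq_card_orbits_mul_card_addGroup (Fin p) (Comp n p)
  rw [cy_eq_card_quot]
  simp only [Nat.card_eq_fintype_card]
  rw [hb, Fintype.card_fin]

end CyAux

open CyAux in
/-- The number of cyclic compositions of `n` into `p` parts is
`Cy(n,p) = (1/n) ∑_{a | gcd(n,p)} φ(a) C(n/a, p/a)`. -/
theorem cyclic_composition_count (n p : ℕ) (hp : 1 ≤ p) (hpn : p ≤ n) :
    (Cy n p : ℚ) = 1 / (n : ℚ) *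
      ∑ a ∈ (Nat.gcd n p).divisors,
        (Nat.totient a : ℚ) * (Nat.choose (n / a) (p / a) : ℚ) := by
  classical
  haveI : NeZero p := ⟨by omega⟩
  have hp0 : 0 < p := hp
  have hn : 1 ≤ n := le_trans hp hpn
  set N : ℕ → ℕ := fun d => if (p / d) ∣ n then (n / (p / d) - 1).choose (d - 1) else 0 with hN
  -- Step 1: Burnside
  have step1 : Cy n p * p = ∑ j ∈ Finset.range p, N (Nat.gcd p j) := by
    rw [← burnside (n := n) (p := p)]
    rw [← Fin.sum_univ_eq_sum_range (fun j => N (Nat.gcd p j)) p]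
    refine Finset.sum_congr rfl fun k _ => ?_
    rw [card_fixedBy hn k, Nat.gcd_comm]
  -- Step 2: group by gcd values
  have step2 : ∑ j ∈ Finset.range p, N (Nat.gcd p j)
      = ∑ d ∈ p.divisors, (p / d).totient * N d := by
    rw [← Finset.sum_fiberwise_of_maps_to (g := fun j => Nat.gcd p j)
      (fun j _ => Nat.mem_divisors.2 ⟨Nat.gcd_dvd_left p j, by omega⟩)]
    refine Finset.sum_congr rfl fun d hd => ?_
    calc (∑ j ∈ Finset.range p with Nat.gcd p j = d, N (Nat.gcd p j))
        = ∑ j ∈ Finset.range p with Nat.gcd p j = d, N d :=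
          Finset.sum_congr rfl fun j hj => by rw [(Finset.mem_filter.1 hj).2]
      _ = (p / d).totient * N d := by
          rw [Finset.sum_const, Nat.totient_div_of_dvd (Nat.dvd_of_mem_divisors hd)]
          simp [mul_comm]
  -- Step 3: reindex d ↦ p / d
  have step3 : ∑ d ∈ p.divisors, (p / d).totient * N d
      = ∑ a ∈ p.divisors, a.totient * N (p / a) := by
    rw [← Nat.sum_div_divisors p (fun a => a.totient * N (p / a))]
    refine Finset.sum_congr rfl fun d hd => ?_
    rw [Nat.div_div_self (Nat.dvd_of_mem_divisors hd) (by omega)]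
  -- Step 4: restrict to divisors of gcd n p
  have hfilter : {a ∈ p.divisors | a ∣ n} = (Nat.gcd n p).divisors := by
    ext a
    simp only [Finset.mem_filter, Nat.mem_divisors]
    constructor
    · rintro ⟨⟨hap, _⟩, han⟩
      exact ⟨Nat.dvd_gcd han hap, Nat.ne_of_gt (Nat.gcd_pos_of_pos_right n hp0)⟩
    · rintro ⟨hag, _⟩
      exact ⟨⟨hag.trans (Nat.gcd_dvd_right n p), by omega⟩, hag.trans (Nat.gcd_dvd_left n p)⟩
  have step4 : ∑ a ∈ p.divisors, a.totient * N (p / a)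
      = ∑ a ∈ (Nat.gcd n p).divisors, a.totient * (n / a - 1).choose (p / a - 1) := by
    rw [← hfilter, Finset.sum_filter]
    refine Finset.sum_congr rfl fun a ha => ?_
    have hap : a ∣ p := Nat.dvd_of_mem_divisors ha
    have ha0 : 0 < a := Nat.pos_of_mem_divisors ha
    have hpa : p / (p / a) = a := Nat.div_div_self hap (by omega)
    rw [hN]
    simp only [hpa]
    by_cases han : a ∣ n
    · rw [if_pos han, if_pos han]
    · rw [if_neg han, if_neg han, Nat.mul_zero]
  -- Key identity in ℕ
  have key : Cy n p * p = ∑ a ∈ (Nat.gcd n p).divisors,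
      a.totient * (n / a - 1).choose (p / a - 1) := by
    rw [step1, step2, step3, step4]
  -- per-term identity: n * C(n/a - 1, p/a - 1) = p * C(n/a, p/a)
  have term : ∀ a ∈ (Nat.gcd n p).divisors,
      n * ((n / a - 1).choose (p / a - 1)) = p * ((n / a).choose (p / a)) := by
    intro a ha
    have hag : a ∣ Nat.gcd n p := Nat.dvd_of_mem_divisors ha
    have han : a ∣ n := hag.trans (Nat.gcd_dvd_left n p)
    have hap : a ∣ p := hag.trans (Nat.gcd_dvd_right n p)
    have ha0 : 0 < a := Nat.pos_of_mem_divisors ha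
    set m := n / a with hm
    set k := p / a with hk
    have hmn : n = a * m := (Nat.mul_div_cancel' han).symm
    have hkp : p = a * k := (Nat.mul_div_cancel' hap).symm
    have hm0 : 0 < m := Nat.div_pos (Nat.le_of_dvd (by omega) han) ha0
    have hk0 : 0 < k := Nat.div_pos (Nat.le_of_dvd (by omega) hap) ha0
    have hc := Nat.add_one_mul_choose_eq (m - 1) (k - 1)
    rw [(by omega : m - 1 + 1 = m), (by omega : k - 1 + 1 = k)] at hc
    -- hc : m * (m-1).choose (k-1) = m.choose k * k
    calc n * ((m - 1).choose (k - 1)) = a * (m * (m - 1).choose (k - 1)) := by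
          rw [hmn]; ring
      _ = a * (m.choose k * k) := by rw [hc]
      _ = (a * k) * m.choose k := by ring
      _ = p * m.choose k := by rw [← hkp]
  -- multiply key by n, replace terms, divide by p
  have key2 : p * (Cy n p * n) = p * ∑ a ∈ (Nat.gcd n p).divisors,
      a.totient * ((n / a).choose (p / a)) := by
    calc p * (Cy n p * n) = (Cy n p * p) * n := by ring
    _ = (∑ a ∈ (Nat.gcd n p).divisors, a.totient * (n / a - 1).choose (p / a - 1)) * n := by
        rw [key]
    _ = ∑ a ∈ (Nat.gcd n p).divisors,
        a.totient * (n * ((n / a - 1).choose (p / a - 1))) := by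
        rw [Finset.sum_mul]
        exact Finset.sum_congr rfl fun a _ => by ring
    _ = ∑ a ∈ (Nat.gcd n p).divisors,
        a.totient * (p * ((n / a).choose (p / a))) := by
        exact Finset.sum_congr rfl fun a ha => by rw [term a ha]
    _ = p * ∑ a ∈ (Nat.gcd n p).divisors, a.totient * ((n / a).choose (p / a)) := by
        rw [Finset.mul_sum]
        exact Finset.sum_congr rfl fun a _ => by ring
  have key3 : Cy n p * n = ∑ a ∈ (Nat.gcd n p).divisors,
      a.totient * ((n / a).choose (p / a)) := Nat.eq_of_mul_eq_mul_left hp0 key2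
  -- cast to ℚ
  have hcast : ((Cy n p : ℚ)) * (n : ℚ) = ∑ a ∈ (Nat.gcd n p).divisors,
      (a.totient : ℚ) * ((n / a).choose (p / a) : ℚ) := by
    have := congrArg (fun x : ℕ => (x : ℚ)) key3
    push_cast at this
    exact this
  have hn0 : (n : ℚ) ≠ 0 := Nat.cast_ne_zero.2 (by omega)
  field_simp
  linarith [hcast]
end

section
/- For all integers q ≥ p ≥ 1, the following identity holds in ℚ: ∑_ω 1/|Stab(ω)| = ∑_{d | gcd(q,p)} (1/d)·Cy_prim(q/d, p/d), where the left-hand sum runs over all cyclic compositions ω of q into p parts, |Stab(ω)| is the order of the rotation-stabilizer of (any representative of) ω, and the right-hand sum runs over the positive divisors d of gcd(q,p). -/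
namespace CycAux
open Fin.NatCast


section Periods
variable {p : ℕ} [NeZero p]

/-- `m : ℕ` is a rotation period of `f : Fin p → ℕ`. -/
def Per (f : Fin p → ℕ) (m : ℕ) : Prop := ∀ i, f (i + (m : Fin p)) = f i

lemma per_iff_nat {f : Fin p → ℕ} {m : ℕ} :
    Per f m ↔ ∀ a : ℕ, f ↑(a + m) = f ↑a := by
  constructor
  · intro h a; rw [Nat.cast_add]; exact h _
  · intro h i
    have := h i.val
    rwa [Nat.cast_add, Fin.cast_val_eq_self] at this

lemma per_p (f : Fin p → ℕ) : Per f p := fun i => by simp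

lemma per_add {f : Fin p → ℕ} {a b : ℕ} (ha : Per f a) (hb : Per f b) :
    Per f (a + b) := by
  intro i
  rw [Nat.cast_add, ← add_assoc, hb, ha]

lemma per_mul {f : Fin p → ℕ} {a : ℕ} (ha : Per f a) (k : ℕ) : Per f (k * a) := by
  induction k with
  | zero => intro i; simp
  | succ k ih => rw [Nat.succ_mul]; exact per_add ih ha

lemma per_sub {f : Fin p → ℕ} {a b : ℕ} (hba : b ≤ a) (ha : Per f a) (hb : Per f b) :
    Per f (a - b) := by
  intro i
  calc f (i + ↑(a - b)) = f (i + ↑(a - b) + ↑b) := (hb _).symm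
    _ = f (i + ↑a) := by rw [add_assoc, ← Nat.cast_add, Nat.sub_add_cancel hba]
    _ = f i := ha i

lemma per_mod {f : Fin p → ℕ} {a b : ℕ} (ha : Per f a) (hb : Per f b) :
    Per f (b % a) := by
  have h1 : b % a = b - a * (b / a) := by
    have := Nat.mod_add_div b a; omega
  have h2 : a * (b / a) ≤ b := Nat.mul_div_le b a
  rw [h1]
  exact per_sub (by omega) hb (by rw [mul_comm]; exact per_mul ha _)

lemma per_gcd {f : Fin p → ℕ} : ∀ a b : ℕ, Per f a → Per f b → Per f (Nat.gcd a b) := by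
  intro a
  induction a using Nat.strong_induction_on with
  | _ a ih =>
    intro b ha hb
    match a with
    | 0 => simpa using hb
    | (a + 1) =>
      rw [Nat.gcd_rec]
      exact ih _ (Nat.mod_lt _ (by omega)) _ (per_mod ha hb) ha

/-- The minimal positive rotation period of `f`. -/
noncomputable def minPer (f : Fin p → ℕ) : ℕ := sInf {m | 0 < m ∧ Per f m}

lemma minPer_mem (f : Fin p → ℕ) : 0 < minPer f ∧ Per f (minPer f) := by
  have hne : {m | 0 < m ∧ Per f m}.Nonempty :=
    ⟨p, Nat.pos_of_ne_zero (NeZero.ne p), per_p f⟩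
  exact Nat.sInf_mem hne

lemma minPer_pos (f : Fin p → ℕ) : 0 < minPer f := (minPer_mem f).1

lemma minPer_per (f : Fin p → ℕ) : Per f (minPer f) := (minPer_mem f).2

lemma minPer_le {f : Fin p → ℕ} {m : ℕ} (h0 : 0 < m) (h : Per f m) : minPer f ≤ m :=
  Nat.sInf_le ⟨h0, h⟩

lemma minPer_dvd {f : Fin p → ℕ} {m : ℕ} (h : Per f m) : minPer f ∣ m := by
  rcases Nat.eq_zero_or_pos m with rfl | hm
  · exact dvd_zero _
  have hg : Per f (Nat.gcd (minPer f) m) := per_gcd _ _ (minPer_per f) h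
  have hgpos : 0 < Nat.gcd (minPer f) m := Nat.gcd_pos_of_pos_left _ (minPer_pos f)
  have h1 : minPer f ≤ Nat.gcd (minPer f) m := minPer_le hgpos hg
  have h2 : Nat.gcd (minPer f) m ≤ minPer f := Nat.gcd_le_left _ (minPer_pos f)
  have : Nat.gcd (minPer f) m = minPer f := le_antisymm h2 h1
  rw [← this]
  exact Nat.gcd_dvd_right _ _

lemma per_of_dvd {f : Fin p → ℕ} {m : ℕ} (h : minPer f ∣ m) : Per f m := by
  obtain ⟨k, rfl⟩ := h
  rw [mul_comm]
  exact per_mul (minPer_per f) k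

lemma minPer_dvd_p (f : Fin p → ℕ) : minPer f ∣ p := minPer_dvd (per_p f)

lemma per_natCast_congr {f : Fin p → ℕ} {m a b : ℕ} (hper : Per f m)
    (h : a ≡ b [MOD m]) : f ↑a = f ↑b := by
  have key : ∀ c k : ℕ, f ↑(c + m * k) = f ↑c := by
    intro c k
    have : Per f (m * k) := by rw [mul_comm]; exact per_mul hper k
    exact per_iff_nat.mp this c
  rcases le_total a b with hab | hab
  · obtain ⟨k, hk⟩ := (Nat.modEq_iff_dvd' hab).mp h
    have : b = a + m * k := by omega
    rw [this, key]
  · obtain ⟨k, hk⟩ := (Nat.modEq_iff_dvd' hab).mp h.symm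
    have : a = b + m * k := by omega
    rw [this, key]

end Periods

section Orbits
variable {p : ℕ} [NeZero p]

lemma self_mem_orbit (f : Fin p → ℕ) : f ∈ orbitOf f :=
  ⟨0, by simp⟩

lemma orbit_eq_of_mem {f g : Fin p → ℕ} (hg : g ∈ orbitOf f) : orbitOf g = orbitOf f := by
  obtain ⟨k, rfl⟩ := hg
  ext h
  constructor
  · rintro ⟨j, rfl⟩
    exact ⟨j + k, by simp [add_assoc]⟩
  · rintro ⟨j, rfl⟩
    refine ⟨j - k, ?_⟩
    funext i
    simp only []
    congr 1
    rw [add_assoc, sub_add_cancel]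

lemma orbit_finite (f : Fin p → ℕ) : (orbitOf f).Finite := by
  have : orbitOf f = Set.range (fun k : Fin p => fun i => f (i + k)) := by
    ext g; simp [orbitOf, Set.mem_range, eq_comm]
  rw [this]
  exact Set.finite_range _

lemma per_shift {f : Fin p → ℕ} {m : ℕ} (hper : Per f m) (x : Fin p) (a : ℕ) :
    f (x + ↑(a + m)) = f (x + ↑a) := by
  rw [Nat.cast_add, ← add_assoc]; exact hper _

lemma per_shift_congr {f : Fin p → ℕ} {m : ℕ} (hper : Per f m) (x : Fin p) {a b : ℕ}
    (h : a ≡ b [MOD m]) : f (x + ↑a) = f (x + ↑b) := by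
  have key : ∀ c k : ℕ, f (x + ↑(c + m * k)) = f (x + ↑c) := by
    intro c k
    induction k with
    | zero => simp
    | succ k ih =>
      have : c + m * (k + 1) = (c + m * k) + m := by ring
      rw [this, per_shift hper, ih]
  rcases le_total a b with hab | hab
  · obtain ⟨k, hk⟩ := (Nat.modEq_iff_dvd' hab).mp h
    have hb : b = a + m * k := by omega
    rw [hb, key]
  · obtain ⟨k, hk⟩ := (Nat.modEq_iff_dvd' hab).mp h.symm
    have ha : a = b + m * k := by omega
    rw [ha, key]

lemma ncard_orbit (f : Fin p → ℕ) : (orbitOf f).ncard = minPer f := by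
  rw [← Nat.card_coe_set_eq]
  set m := minPer f with hm
  have hmpos : 0 < m := minPer_pos f
  let F : Fin m → (orbitOf f) := fun j =>
    ⟨fun i => f (i + (j.val : Fin p)), ⟨(j.val : Fin p), rfl⟩⟩
  have hinj : Function.Injective F := by
    have key : ∀ a b : Fin m, a.val ≤ b.val →
        (fun i => f (i + (a.val : Fin p))) = (fun i => f (i + (b.val : Fin p))) → a = b := by
      intro a b hab h
      by_contra hne
      have hlt : a.val < b.val := lt_of_le_of_ne hab (fun hh => hne (Fin.ext hh))
      have hper : Per f (b.val - a.val) := by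
        intro i
        have h1 := congrFun h (i - (a.val : Fin p))
        beta_reduce at h1
        have h2 : i - (a.val : Fin p) + (a.val : Fin p) = i := sub_add_cancel i _
        have h3 : i - (a.val : Fin p) + (b.val : Fin p) = i + ↑(b.val - a.val) := by
          have : ((b.val - a.val : ℕ) : Fin p) + (a.val : Fin p) = (b.val : Fin p) := by
            rw [← Nat.cast_add, Nat.sub_add_cancel hab]
          rw [← this]; abel
        rw [h2, h3] at h1
        exact h1.symm
      have : m ≤ b.val - a.val := minPer_le (by omega) hper
      omega
    intro a b h
    have h' : (fun i => f (i + (a.val : Fin p))) = (fun i => f (i + (b.val : Fin p))) :=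
      congrArg Subtype.val h
    rcases le_total a.val b.val with hab | hab
    · exact key a b hab h'
    · exact (key b a hab h'.symm).symm
  have hsurj : Function.Surjective F := by
    rintro ⟨g, k, rfl⟩
    refine ⟨⟨k.val % m, Nat.mod_lt _ hmpos⟩, ?_⟩
    apply Subtype.ext
    funext i
    show f (i + ((k.val % m : ℕ) : Fin p)) = f (i + k)
    have hcongr : (k.val % m) ≡ k.val [MOD m] := Nat.mod_modEq _ _
    rw [per_shift_congr (minPer_per f) i hcongr, Fin.cast_val_eq_self]
  have e : Fin m ≃ (orbitOf f) := Equiv.ofBijective F ⟨hinj, hsurj⟩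
  rw [← Nat.card_congr e, Nat.card_eq_fintype_card, Fintype.card_fin]

lemma ncard_dvd_val {m : ℕ} (hm : m ∣ p) (h0 : 0 < m) :
    {k : Fin p | m ∣ k.val}.ncard = p / m := by
  rw [← Nat.card_coe_set_eq]
  have e : {k : Fin p | m ∣ k.val} ≃ Fin (p / m) :=
    { toFun := fun k => ⟨k.1.val / m, Nat.div_lt_div_of_lt_of_dvd hm k.1.isLt⟩
      invFun := fun j => ⟨⟨j.val * m, by
        calc j.val * m < (p / m) * m := (Nat.mul_lt_mul_right h0).mpr j.isLt
          _ = p := Nat.div_mul_cancel hm⟩, dvd_mul_left m j.val⟩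
      left_inv := fun k => Subtype.ext (Fin.ext (Nat.div_mul_cancel k.2))
      right_inv := fun j => Fin.ext (Nat.mul_div_cancel _ h0) }
  rw [Nat.card_congr e, Nat.card_eq_fintype_card, Fintype.card_fin]

lemma stab_set_eq (f : Fin p → ℕ) :
    {k : Fin p | ∀ g ∈ orbitOf f, (fun i => g (i + k)) = g} = {k : Fin p | minPer f ∣ k.val} := by
  ext k
  simp only [Set.mem_setOf_eq]
  constructor
  · intro h
    have h1 := h f (self_mem_orbit f)
    apply minPer_dvd
    intro i
    rw [Fin.cast_val_eq_self]
    exact congrFun h1 i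
  · intro hk g hg
    obtain ⟨j, rfl⟩ := hg
    have hper : Per f k.val := per_of_dvd hk
    funext i
    show f (i + k + j) = f (i + j)
    have hh := hper (i + j)
    rw [Fin.cast_val_eq_self] at hh
    rw [add_right_comm]
    exact hh
  
lemma stabOrd_orbit (f : Fin p → ℕ) : stabOrd (orbitOf f) = p / minPer f := by
  unfold stabOrd
  rw [stab_set_eq]
  exact ncard_dvd_val (minPer_dvd_p f) (minPer_pos f)

end Orbits

section Extend
variable {p m : ℕ} [NeZero p] [NeZero m]

lemma finCast_congr {a b : ℕ} (h : a ≡ b [MOD m]) : (a : Fin m) = (b : Fin m) := by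
  apply Fin.ext
  rw [Fin.val_natCast, Fin.val_natCast]
  exact h

/-- Extend `g : Fin m → ℕ` periodically to `Fin p → ℕ`. -/
def extend (p : ℕ) [NeZero p] (g : Fin m → ℕ) : Fin p → ℕ := fun i => g ↑i.val

lemma extend_natCast (hm : m ∣ p) (g : Fin m → ℕ) (a : ℕ) :
    extend p g ↑a = g ↑a := by
  show g ↑((a : Fin p)).val = g ↑a
  rw [Fin.val_natCast]
  exact congrArg g (finCast_congr (Nat.ModEq.of_dvd hm (Nat.mod_modEq a p)))

lemma per_extend_iff (hm : m ∣ p) (g : Fin m → ℕ) (m' : ℕ) :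
    Per (extend p g) m' ↔ Per g m' := by
  rw [per_iff_nat, per_iff_nat]
  constructor
  · intro h a
    have := h a
    rwa [extend_natCast hm, extend_natCast hm] at this
  · intro h a
    rw [extend_natCast hm, extend_natCast hm]
    exact h a

lemma minPer_extend (hm : m ∣ p) (g : Fin m → ℕ) :
    minPer (extend p g) = minPer g := by
  unfold minPer
  congr 1
  ext m'
  simp only [Set.mem_setOf_eq, per_extend_iff hm]

lemma extend_trunc {f : Fin p → ℕ} (hper : Per f m) :
    extend p (fun j : Fin m => f ↑j.val) = f := by
  funext i
  show f ↑(((i.val : Fin m)).val) = f i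
  rw [Fin.val_natCast]
  conv_rhs => rw [← Fin.cast_val_eq_self i]
  exact per_natCast_congr hper (Nat.mod_modEq _ _)

lemma trunc_extend (hm : m ∣ p) (g : Fin m → ℕ) :
    (fun j : Fin m => extend p g ↑j.val) = g := by
  funext j
  rw [extend_natCast hm, Fin.cast_val_eq_self]

lemma extend_injective (hm : m ∣ p) : Function.Injective (extend p (m := m)) := by
  intro g1 g2 h
  rw [← trunc_extend hm g1, ← trunc_extend hm g2, h]

lemma sum_extend (hm : m ∣ p) (g : Fin m → ℕ) :
    ∑ i, extend p g i = (p / m) * ∑ j, g j := by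
  have hm0 : 0 < m := Nat.pos_of_ne_zero (NeZero.ne m)
  set F : ℕ → ℕ := fun a => g ↑a with hF
  have hFper : ∀ x k : ℕ, F (k * m + x) = F x := by
    intro x k
    show g _ = g _
    apply congrArg g
    apply finCast_congr
    show (k * m + x) % m = x % m
    calc (k * m + x) % m = (x + k * m) % m := by rw [Nat.add_comm]
      _ = x % m := Nat.add_mul_mod_self_right x k m
  have key : ∀ k, ∑ a ∈ Finset.range (k * m), F a = k * ∑ a ∈ Finset.range m, F a := by
    intro k
    induction k with
    | zero => simp
    | succ k ih =>
      have h1 : (k + 1) * m = k * m + m := by ring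
      rw [h1, Finset.sum_range_add, ih]
      have h2 : ∀ x ∈ Finset.range m, F (k * m + x) = F x := fun x _ => hFper x k
      rw [Finset.sum_congr rfl h2]
      ring
  have h1 : ∑ i : Fin p, extend p g i = ∑ a ∈ Finset.range p, F a :=
    Fin.sum_univ_eq_sum_range F p
  have h2 : ∑ a ∈ Finset.range m, F a = ∑ j : Fin m, g j := by
    rw [← Fin.sum_univ_eq_sum_range F m]
    exact Finset.sum_congr rfl (fun j _ => by rw [hF]; simp [Fin.cast_val_eq_self])
  rw [h1, ← Nat.div_mul_cancel hm, key (p / m), h2, Nat.div_mul_cancel hm]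

lemma sum_of_per {f : Fin p → ℕ} (hm : m ∣ p) (hper : Per f m) :
    ∑ i, f i = (p / m) * ∑ j : Fin m, f ↑j.val := by
  conv_lhs => rw [← extend_trunc hper]
  exact sum_extend hm _

end Extend

section Counting
variable {p : ℕ} [NeZero p]

lemma comp_finite (n p : ℕ) : {f : Fin p → ℕ | IsComp n p f}.Finite := by
  apply Set.Finite.subset (Set.Finite.pi (fun _ : Fin p => Set.finite_Iic n))
  intro f hf
  intro i _
  have h1 : f i ≤ ∑ j, f j :=
    Finset.single_le_sum (fun j _ => Nat.zero_le _) (Finset.mem_univ i)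
  rw [hf.2] at h1
  exact h1

lemma isComp_shift {n : ℕ} {f : Fin p → ℕ} (h : IsComp n p f) (k : Fin p) :
    IsComp n p (fun i => f (i + k)) := by
  refine ⟨fun i => h.1 _, ?_⟩
  rw [← h.2]
  exact Fintype.sum_equiv (Equiv.addRight k) _ _ (fun i => rfl)

lemma isComp_of_mem_orbit {n : ℕ} {f g : Fin p → ℕ} (h : IsComp n p f)
    (hg : g ∈ orbitOf f) : IsComp n p g := by
  obtain ⟨k, rfl⟩ := hg
  exact isComp_shift h k

open scoped Classical in
/-- Summing a constant weight over the orbits inside an orbit-closed finite set. -/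
lemma sum_over_orbits {C : Set (Fin p → ℕ)} (hC : C.Finite)
    (hcl : ∀ f ∈ C, orbitOf f ⊆ C) (w : ℚ) :
    ∑ S ∈ ((hC.image orbitOf).toFinset), (S.ncard : ℚ) * w = hC.toFinset.card * w := by
  classical
  have him : (hC.image orbitOf).toFinset = hC.toFinset.image orbitOf :=
    Set.Finite.toFinset_image _ _ _
  have fiber : ∀ S ∈ hC.toFinset.image orbitOf,
      ((hC.toFinset.filter (fun g => orbitOf g = S)).card : ℚ) = (S.ncard : ℚ) := by
    intro S hS
    obtain ⟨f0, hf0, rfl⟩ := Finset.mem_image.mp hS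
    have hf0C : f0 ∈ C := hC.mem_toFinset.mp hf0
    have hset : (↑(hC.toFinset.filter (fun g => orbitOf g = orbitOf f0)) : Set (Fin p → ℕ))
        = orbitOf f0 := by
      ext g
      simp only [Finset.coe_filter, Set.mem_setOf_eq, Set.Finite.mem_toFinset]
      constructor
      · rintro ⟨hgC, heq⟩
        rw [← heq]
        exact self_mem_orbit g
      · intro hgS
        exact ⟨hcl f0 hf0C hgS, orbit_eq_of_mem hgS⟩
    rw [← Set.ncard_coe_finset, hset]
  rw [him]
  calc ∑ S ∈ hC.toFinset.image orbitOf, (S.ncard : ℚ) * w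
      = ∑ S ∈ hC.toFinset.image orbitOf,
          ((hC.toFinset.filter (fun g => orbitOf g = S)).card : ℚ) * w := by
        refine Finset.sum_congr rfl (fun S hS => ?_)
        rw [fiber S hS]
    _ = ∑ S ∈ hC.toFinset.image orbitOf,
          (hC.toFinset.filter (fun g => orbitOf g = S)).card • ((fun _ => w) S) := by
        refine Finset.sum_congr rfl (fun S hS => ?_)
        rw [nsmul_eq_mul]
    _ = ∑ f ∈ hC.toFinset, (fun _ => w) (orbitOf f) := (Finset.sum_comp _ orbitOf).symm
    _ = hC.toFinset.card * w := by
        rw [Finset.sum_const, nsmul_eq_mul]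

end Counting

section Main

/-- The set of primitive compositions of `n` into `m` parts. -/
def PrimComp (n m : ℕ) : Set (Fin m → ℕ) :=
  {g : Fin m → ℕ | IsComp n m g ∧ (orbitOf g).ncard = m}

lemma cyPrim_eq (n m : ℕ) [NeZero m] :
    (CyPrim n m : ℚ) * m = ((PrimComp n m).ncard : ℚ) := by
  classical
  have hP : (PrimComp n m).Finite := (comp_finite n m).subset (fun g hg => hg.1)
  have hcl : ∀ f ∈ PrimComp n m, orbitOf f ⊆ PrimComp n m := by
    intro f hf g hg
    exact ⟨isComp_of_mem_orbit hf.1 hg, by rw [orbit_eq_of_mem hg]; exact hf.2⟩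
  have himg : {S | ∃ f : Fin m → ℕ, IsComp n m f ∧ S = orbitOf f ∧ S.ncard = m}
      = orbitOf '' PrimComp n m := by
    ext S
    simp only [Set.mem_setOf_eq, Set.mem_image, PrimComp]
    constructor
    · rintro ⟨f, h1, rfl, h3⟩; exact ⟨f, ⟨h1, h3⟩, rfl⟩
    · rintro ⟨f, ⟨h1, h3⟩, rfl⟩; exact ⟨f, h1, rfl, h3⟩
  have hfin : (orbitOf '' PrimComp n m).Finite := hP.image orbitOf
  have hcard : (orbitOf '' PrimComp n m).ncard = (hP.image orbitOf).toFinset.card := by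
    rw [← Set.ncard_coe_finset, Set.Finite.coe_toFinset]
  have hsum := sum_over_orbits hP hcl 1
  have hconst : ∀ S ∈ (hP.image orbitOf).toFinset, (S.ncard : ℚ) * 1 = (m : ℚ) * 1 := by
    intro S hS
    rw [Set.Finite.mem_toFinset] at hS
    obtain ⟨g, hg, rfl⟩ := hS
    rw [hg.2]
  rw [Finset.sum_congr rfl hconst, Finset.sum_const, nsmul_eq_mul] at hsum
  unfold CyPrim
  rw [himg, hcard]
  have : ((PrimComp n m).ncard : ℚ) = (hP.toFinset.card : ℚ) := by
    rw [Set.ncard_eq_toFinset_card _ hP]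
  simp only [mul_one] at hsum
  rw [this]
  exact hsum

lemma lhs_eq (q p : ℕ) [NeZero p] :
    (∑ᶠ S ∈ cycSet q p, 1 / (stabOrd S : ℚ))
      = ({f : Fin p → ℕ | IsComp q p f}.ncard : ℚ) / p := by
  classical
  have hp0 : (p : ℚ) ≠ 0 := Nat.cast_ne_zero.mpr (NeZero.ne p)
  set C := {f : Fin p → ℕ | IsComp q p f} with hCdef
  have hC : C.Finite := comp_finite q p
  have hcyc : cycSet q p = orbitOf '' C := by
    ext S
    simp only [cycSet, Set.mem_setOf_eq, Set.mem_image, hCdef]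
    constructor
    · rintro ⟨f, h1, rfl⟩; exact ⟨f, h1, rfl⟩
    · rintro ⟨f, h1, rfl⟩; exact ⟨f, h1, rfl⟩
  have hfin : (orbitOf '' C).Finite := hC.image orbitOf
  have hcycfin : (cycSet q p).Finite := hcyc ▸ hfin
  have htf : hcycfin.toFinset = hfin.toFinset := by
    ext S
    simp only [Set.Finite.mem_toFinset, hcyc]
  have h1 : (∑ᶠ S ∈ cycSet q p, 1 / (stabOrd S : ℚ))
      = ∑ S ∈ hfin.toFinset, 1 / (stabOrd S : ℚ) := by
    rw [finsum_mem_eq_finite_toFinset_sum _ hcycfin, htf]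
  have hpoint : ∀ S ∈ hfin.toFinset, 1 / (stabOrd S : ℚ) = (S.ncard : ℚ) * (1 / p) := by
    intro S hS
    rw [Set.Finite.mem_toFinset] at hS
    obtain ⟨f, hf, rfl⟩ := hS
    rw [stabOrd_orbit, ncard_orbit]
    have hdvd := minPer_dvd_p f
    have hm0 : (minPer f : ℚ) ≠ 0 := Nat.cast_ne_zero.mpr (minPer_pos f).ne'
    have hcast : ((p / minPer f : ℕ) : ℚ) = (p : ℚ) / (minPer f : ℚ) :=
      Nat.cast_div hdvd hm0
    rw [hcast]
    field_simp
  rw [h1, Finset.sum_congr rfl hpoint, sum_over_orbits hC (fun f hf g hg => isComp_of_mem_orbit hf hg) (1 / p)]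
  rw [Set.ncard_eq_toFinset_card _ hC]
  ring

end Main

section Bij

lemma ncard_eq_prim (q p d : ℕ) [NeZero p] (hdq : d ∣ q) (hdp : d ∣ p) (hd0 : 0 < d) :
    {f : Fin p → ℕ | IsComp q p f ∧ (orbitOf f).ncard = p / d}.ncard
      = (PrimComp (q / d) (p / d)).ncard := by
  classical
  set m := p / d with hmdef
  have hp0 : 0 < p := Nat.pos_of_ne_zero (NeZero.ne p)
  have hm0 : 0 < m := Nat.div_pos (Nat.le_of_dvd hp0 hdp) hd0
  haveI : NeZero m := ⟨hm0.ne'⟩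
  have hmp : m ∣ p := Nat.div_dvd_of_dvd hdp
  have hpm : p / m = d := Nat.div_div_self hdp (NeZero.ne p)
  have himage : {f : Fin p → ℕ | IsComp q p f ∧ (orbitOf f).ncard = m}
      = extend p '' PrimComp (q / d) m := by
    ext f
    simp only [Set.mem_setOf_eq, Set.mem_image, PrimComp]
    constructor
    · rintro ⟨⟨hpos, hsum⟩, hncard⟩
      have hmin : minPer f = m := by rw [← ncard_orbit f]; exact hncard
      have hper : Per f m := hmin ▸ minPer_per f
      refine ⟨fun j : Fin m => f ↑j.val, ⟨⟨fun j => hpos _, ?_⟩, ?_⟩, extend_trunc hper⟩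
      · rw [← hsum, sum_of_per hmp hper, hpm]
        exact (Nat.mul_div_cancel_left _ hd0).symm
      · rw [ncard_orbit, ← minPer_extend hmp, extend_trunc hper, hmin]
    · rintro ⟨g, ⟨⟨hpos, hsum⟩, hncard⟩, rfl⟩
      refine ⟨⟨fun i => hpos _, ?_⟩, ?_⟩
      · rw [sum_extend hmp, hpm, hsum]
        exact Nat.mul_div_cancel' hdq
      · rw [ncard_orbit, minPer_extend hmp, ← ncard_orbit]
        exact hncard
  rw [himage, Set.ncard_image_of_injOn ((extend_injective hmp).injOn)]

lemma card_partition (q p : ℕ) [NeZero p] :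
    {f : Fin p → ℕ | IsComp q p f}.ncard
      = ∑ d ∈ (Nat.gcd q p).divisors,
          {f : Fin p → ℕ | IsComp q p f ∧ (orbitOf f).ncard = p / d}.ncard := by
  classical
  have hC := comp_finite q p
  rw [Set.ncard_eq_toFinset_card _ hC]
  have hmem : ∀ f ∈ hC.toFinset, p / (orbitOf f).ncard ∈ (Nat.gcd q p).divisors := by
    intro f hf
    rw [Set.Finite.mem_toFinset] at hf
    rw [ncard_orbit]
    have hdp : p / minPer f ∣ p := Nat.div_dvd_of_dvd (minPer_dvd_p f)
    have hdq : p / minPer f ∣ q := by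
      haveI : NeZero (minPer f) := ⟨(minPer_pos f).ne'⟩
      have hs := sum_of_per (minPer_dvd_p f) (minPer_per f)
      rw [hf.2] at hs
      exact ⟨_, hs⟩
    exact Nat.mem_divisors.mpr ⟨Nat.dvd_gcd hdq hdp, Nat.gcd_ne_zero_right (NeZero.ne p)⟩
  rw [Finset.card_eq_sum_card_fiberwise hmem]
  refine Finset.sum_congr rfl (fun d hd => ?_)
  have hdp : d ∣ p := (Nat.mem_divisors.mp hd).1.trans (Nat.gcd_dvd_right q p)
  have hset : (↑(hC.toFinset.filter fun f => p / (orbitOf f).ncard = d) : Set (Fin p → ℕ))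
      = {f : Fin p → ℕ | IsComp q p f ∧ (orbitOf f).ncard = p / d} := by
    ext f
    simp only [Finset.coe_filter, Set.mem_setOf_eq, Set.Finite.mem_toFinset]
    constructor
    · rintro ⟨h1, h2⟩
      refine ⟨h1, ?_⟩
      rw [ncard_orbit] at h2 ⊢
      rw [← h2, Nat.div_div_self (minPer_dvd_p f) (NeZero.ne p)]
    · rintro ⟨h1, h2⟩
      refine ⟨h1, ?_⟩
      rw [ncard_orbit] at h2 ⊢
      rw [h2, Nat.div_div_self hdp (NeZero.ne p)]
  rw [← Set.ncard_coe_finset, hset]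

end Bij

end CycAux

/-- For `q ≥ p ≥ 1`,
`∑_ω 1/|Stab(ω)| = ∑_{d | gcd(q,p)} (1/d)·Cy_prim(q/d, p/d)`,
the left-hand sum ranging over all cyclic compositions `ω` of `q` into `p` parts. -/
theorem stabilizer_sum_eq (q p : ℕ) (hp : 1 ≤ p) (hpq : p ≤ q) :
    (∑ᶠ S ∈ cycSet q p, 1 / (stabOrd S : ℚ)) =
      ∑ d ∈ (Nat.gcd q p).divisors, 1 / (d : ℚ) * (CyPrim (q / d) (p / d) : ℚ) := by
  haveI : NeZero p := ⟨by omega⟩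
  have hp0 : (p : ℚ) ≠ 0 := Nat.cast_ne_zero.mpr (NeZero.ne p)
  rw [CycAux.lhs_eq q p]
  have hL : ({f : Fin p → ℕ | IsComp q p f}.ncard : ℚ)
      = ∑ d ∈ (Nat.gcd q p).divisors,
          ({f : Fin p → ℕ | IsComp q p f ∧ (orbitOf f).ncard = p / d}.ncard : ℚ) := by
    rw [CycAux.card_partition q p]
    push_cast
    rfl
  rw [hL, Finset.sum_div]
  refine Finset.sum_congr rfl (fun d hd => ?_)
  have hdvd := (Nat.mem_divisors.mp hd).1
  have hdq : d ∣ q := hdvd.trans (Nat.gcd_dvd_left q p)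
  have hdp : d ∣ p := hdvd.trans (Nat.gcd_dvd_right q p)
  have hd0 : 0 < d := Nat.pos_of_mem_divisors hd
  have hppos : 0 < p := Nat.pos_of_ne_zero (NeZero.ne p)
  haveI : NeZero (p / d) := ⟨(Nat.div_pos (Nat.le_of_dvd hppos hdp) hd0).ne'⟩
  rw [CycAux.ncard_eq_prim q p d hdq hdp hd0, ← CycAux.cyPrim_eq (q / d) (p / d)]
  have hd0' : (d : ℚ) ≠ 0 := Nat.cast_ne_zero.mpr hd0.ne'
  have hcast : ((p / d : ℕ) : ℚ) = (p : ℚ) / (d : ℚ) := Nat.cast_div hdp hd0'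
  rw [hcast]
  field_simp
end

section
/- For every integer q ≥ 1, the following identity holds in ℚ: ∑_{p=1}^{q} (−1)^p · ( ∑_ω 1/|Stab(ω)| ) = −1/q, where for each p the inner sum runs over all cyclic compositions ω of q into p parts and |Stab(ω)| is the order of the rotation-stabilizer of (any representative of) ω. -/
section Aux

variable {p : ℕ} [NeZero p]

/-- The rotation action of `Fin p` on `Fin p → ℕ`. -/
instance rotAction : AddAction (Fin p) (Fin p → ℕ) where
  vadd k f := fun i => f (i + k)
  zero_vadd f := funext fun i => by show f (i + 0) = f i; rw [add_zero]
  add_vadd j k f := funext fun i => congrArg f (add_assoc i j k).symm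

lemma vadd_def (k : Fin p) (f : Fin p → ℕ) : k +ᵥ f = fun i => f (i + k) := rfl

lemma mem_orbitOf_self (f : Fin p → ℕ) : f ∈ orbitOf f :=
  ⟨0, by funext i; rw [add_zero]⟩

lemma orbitOf_eq (f : Fin p → ℕ) : orbitOf f = AddAction.orbit (Fin p) f := by
  ext g
  simp only [orbitOf, Set.mem_setOf_eq, AddAction.mem_orbit_iff]
  exact ⟨fun ⟨k, h⟩ => ⟨k, h.symm⟩, fun ⟨k, h⟩ => ⟨k, h.symm⟩⟩

lemma orbitOf_finite (f : Fin p → ℕ) : (orbitOf f).Finite := by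
  rw [orbitOf_eq]; exact Set.finite_range _

lemma stabSet_eq (f : Fin p → ℕ) :
    {k : Fin p | ∀ g ∈ orbitOf f, (fun i => g (i + k)) = g} =
      (AddAction.stabilizer (Fin p) f : Set (Fin p)) := by
  ext k
  simp only [Set.mem_setOf_eq, SetLike.mem_coe, AddAction.mem_stabilizer_iff]
  constructor
  · intro h
    exact h f (mem_orbitOf_self f)
  · rintro h g ⟨j, rfl⟩
    funext i
    show f (i + k + j) = f (i + j)
    have hcomm : k +ᵥ (j +ᵥ f) = j +ᵥ f := by
      rw [← add_vadd, add_comm, add_vadd, h]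
    exact congrFun hcomm i

lemma stabOrd_orbitOf (f : Fin p → ℕ) :
    stabOrd (orbitOf f) = Nat.card (AddAction.stabilizer (Fin p) f) := by
  rw [stabOrd, stabSet_eq, ← Nat.card_coe_set_eq]
  rfl

lemma orbit_mul_stab (f : Fin p → ℕ) :
    (orbitOf f).ncard * stabOrd (orbitOf f) = p := by
  classical
  haveI : Fintype (AddAction.orbit (Fin p) f) := Set.fintypeRange _
  haveI : Fintype (AddAction.stabilizer (Fin p) f) := Fintype.ofFinite _
  have h := AddAction.card_orbit_mul_card_stabilizer_eq_card_addGroup (Fin p) f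
  rw [stabOrd_orbitOf, orbitOf_eq, ← Nat.card_coe_set_eq, Nat.card_eq_fintype_card,
    Nat.card_eq_fintype_card]
  simpa using h

lemma one_div_stabOrd (f : Fin p → ℕ) :
    1 / (stabOrd (orbitOf f) : ℚ) = ((orbitOf f).ncard : ℚ) / p := by
  have h := orbit_mul_stab f
  have hp : (p : ℚ) ≠ 0 := Nat.cast_ne_zero.mpr (NeZero.ne p)
  have hs : stabOrd (orbitOf f) ≠ 0 := by
    intro h0; rw [h0, mul_zero] at h; exact (NeZero.ne p) h.symm
  have hq : ((orbitOf f).ncard : ℚ) * (stabOrd (orbitOf f) : ℚ) = p := by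
    exact_mod_cast congrArg (Nat.cast : ℕ → ℚ) h
  field_simp
  linarith [hq]

omit [NeZero p] in
lemma finsum_mem_const (s : Set (Fin p → ℕ)) (hs : s.Finite) (c : ℚ) :
    ∑ᶠ i ∈ s, c = s.ncard * c := by
  rw [finsum_mem_eq_finite_toFinset_sum _ hs, Finset.sum_const, Set.ncard_eq_toFinset_card _ hs,
    nsmul_eq_mul]

end Aux

section Counting

lemma isComp_of_mem_orbit {q p : ℕ} [NeZero p] {f g : Fin p → ℕ} (hf : IsComp q p f)
    (hg : g ∈ orbitOf f) : IsComp q p g := by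
  obtain ⟨k, rfl⟩ := hg
  refine ⟨fun i => hf.1 _, ?_⟩
  rw [← hf.2]
  exact Fintype.sum_equiv (Equiv.addRight k) _ _ (fun i => rfl)

lemma sUnion_cycSet (q p : ℕ) [NeZero p] :
    ⋃₀ cycSet q p = {f : Fin p → ℕ | IsComp q p f} := by
  ext g
  simp only [Set.mem_sUnion, Set.mem_setOf_eq]
  constructor
  · rintro ⟨S, ⟨f, hf, rfl⟩, hg⟩
    exact isComp_of_mem_orbit hf hg
  · intro hg
    exact ⟨orbitOf g, ⟨g, hg, rfl⟩, mem_orbitOf_self g⟩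

lemma comps_finite (q p : ℕ) : {f : Fin p → ℕ | IsComp q p f}.Finite := by
  apply Set.Finite.subset (Set.Finite.pi (fun _ : Fin p => Set.finite_Iic q))
  intro f hf
  rw [Set.mem_pi]
  intro i _
  exact le_trans (Finset.single_le_sum (f := f) (fun j _ => Nat.zero_le _) (Finset.mem_univ i))
    hf.2.le

lemma cycSet_eq_image (q p : ℕ) :
    cycSet q p = orbitOf '' {f : Fin p → ℕ | IsComp q p f} := by
  ext S
  simp only [cycSet, Set.mem_setOf_eq, Set.mem_image]
  exact ⟨fun ⟨f, h1, h2⟩ => ⟨f, h1, h2.symm⟩, fun ⟨f, h1, h2⟩ => ⟨f, h1, h2.symm⟩⟩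

lemma cycSet_finite (q p : ℕ) : (cycSet q p).Finite := by
  rw [cycSet_eq_image]; exact (comps_finite q p).image _

lemma cycSet_pairwiseDisjoint (q p : ℕ) [NeZero p] :
    (cycSet q p).PairwiseDisjoint id := by
  rintro S ⟨f, _, rfl⟩ T ⟨g, _, rfl⟩ hne
  simp only [Function.onFun, id]
  rw [Set.disjoint_left]
  intro x hxS hxT
  apply hne
  rw [orbitOf_eq] at hxS hxT ⊢
  rw [orbitOf_eq g]
  rw [← AddAction.orbit_eq_iff] at hxS hxT
  rw [← hxS, ← hxT]

lemma comps_ncard {q p : ℕ} (hp : 1 ≤ p) (hpq : p ≤ q) :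
    {f : Fin p → ℕ | IsComp q p f}.ncard = (q - 1).choose (p - 1) := by
  classical
  set A : Finset (Fin p → ℕ) :=
    (Finset.piAntidiag Finset.univ (q - p)).map ⟨fun g => g + 1, add_left_injective 1⟩ with hAdef
  have hA : {f : Fin p → ℕ | IsComp q p f} = ↑A := by
    ext f
    simp only [hAdef, Finset.coe_map, Set.mem_image, Finset.mem_coe, Finset.mem_piAntidiag,
      Function.Embedding.coeFn_mk, Set.mem_setOf_eq]
    constructor
    · rintro ⟨hpos, hsum⟩
      refine ⟨fun i => f i - 1, ⟨?_, fun i _ => Finset.mem_univ i⟩, ?_⟩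
      · have h1 : ∑ i, (f i - 1) + p = q := by
          have : ∑ i, ((f i - 1) + 1) = q := by
            rw [← hsum]; exact Finset.sum_congr rfl (fun i _ => by
              have := hpos i; omega)
          rw [Finset.sum_add_distrib] at this
          simpa [Finset.card_univ] using this
        omega
      · funext i
        show f i - 1 + 1 = f i
        have := hpos i; omega
    · rintro ⟨g, ⟨hsum, -⟩, rfl⟩
      refine ⟨fun i => by simp [Pi.add_apply], ?_⟩
      have : ∑ i, (g i + 1) = ∑ i, g i + p := by
        rw [Finset.sum_add_distrib]; simp [Finset.card_univ]
      show ∑ i, (g i + 1) = q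
      rw [this, hsum]; omega
  rw [hA, Set.ncard_coe_finset, hAdef, Finset.card_map]
  have hmap := Finset.map_sym_eq_piAntidiag (Finset.univ : Finset (Fin p)) (q - p)
  have hcard : (Finset.piAntidiag (Finset.univ : Finset (Fin p)) (q - p)).card = Fintype.card (Sym (Fin p) (q - p)) := by
    rw [← hmap, Finset.card_map, Finset.sym_univ, Finset.card_univ]
  rw [hcard, Sym.card_sym_eq_choose, Fintype.card_fin]
  have h1 : p + (q - p) - 1 = q - 1 := by omega
  have h2 : q - p = (q - 1) - (p - 1) := by omega
  rw [h1, h2, Nat.choose_symm (by omega)]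

lemma innerSum {q p : ℕ} (hp : 1 ≤ p) (hpq : p ≤ q) :
    ∑ᶠ S ∈ cycSet q p, 1 / (stabOrd S : ℚ) = ((q - 1).choose (p - 1) : ℚ) / p := by
  haveI : NeZero p := ⟨by omega⟩
  have hfin := cycSet_finite q p
  have hmem : ∀ S ∈ cycSet q p, S.Finite := by
    rintro S ⟨f, _, rfl⟩; exact orbitOf_finite f
  have step1 : ∑ᶠ S ∈ cycSet q p, 1 / (stabOrd S : ℚ) =
      ∑ᶠ S ∈ cycSet q p, ∑ᶠ x ∈ S, (1 / (p : ℚ)) := by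
    apply finsum_mem_congr rfl
    rintro S ⟨f, _, rfl⟩
    rw [finsum_mem_const _ (orbitOf_finite f), one_div_stabOrd f]
    rw [div_eq_mul_one_div]
  rw [step1, ← finsum_mem_sUnion (cycSet_pairwiseDisjoint q p) hfin hmem, sUnion_cycSet,
    finsum_mem_const _ (comps_finite q p), comps_ncard hp hpq]
  ring

end Counting

lemma alt_sum_choose (q : ℕ) (hq : 1 ≤ q) :
    ∑ p ∈ Finset.Icc 1 q, (-1 : ℚ) ^ p * (q.choose p : ℚ) = -1 := by
  have hZ := Int.alternating_sum_range_choose_of_ne (n := q) (by omega)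
  have hQ : ∑ i ∈ Finset.range (q + 1), (-1 : ℚ) ^ i * (q.choose i : ℚ) = 0 := by
    have := congrArg (Int.cast : ℤ → ℚ) hZ
    push_cast at this
    simpa using this
  have hins : Finset.range (q + 1) = insert 0 (Finset.Icc 1 q) := by
    ext x; simp only [Finset.mem_range, Finset.mem_insert, Finset.mem_Icc]; omega
  rw [hins, Finset.sum_insert (by simp)] at hQ
  simp only [pow_zero, Nat.choose_zero_right, Nat.cast_one, one_mul] at hQ
  linarith

/-- For `q ≥ 1`,
`∑_{p=1}^{q} (-1)^p ∑_ω 1/|Stab(ω)| = -1/q`,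
the inner sum ranging over all cyclic compositions `ω` of `q` into `p` parts. -/
theorem alternating_stabilizer_sum (q : ℕ) (hq : 1 ≤ q) :
    (∑ p ∈ Finset.Icc 1 q, (-1 : ℚ) ^ p * ∑ᶠ S ∈ cycSet q p, 1 / (stabOrd S : ℚ)) =
      -1 / (q : ℚ) := by
  have hqQ : (q : ℚ) ≠ 0 := Nat.cast_ne_zero.mpr (by omega)
  have hstep : ∀ p ∈ Finset.Icc 1 q,
      (-1 : ℚ) ^ p * ∑ᶠ S ∈ cycSet q p, 1 / (stabOrd S : ℚ) =
        (-1 : ℚ) ^ p * (q.choose p : ℚ) / q := by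
    intro p hp
    rw [Finset.mem_Icc] at hp
    rw [innerSum hp.1 hp.2]
    have hnat : q * (q - 1).choose (p - 1) = q.choose p * p := by
      have := Nat.add_one_mul_choose_eq (q - 1) (p - 1)
      have e1 : q - 1 + 1 = q := by omega
      have e2 : p - 1 + 1 = p := by omega
      rw [e1, e2] at this
      exact this
    have hcast : (q : ℚ) * ((q - 1).choose (p - 1) : ℚ) = (q.choose p : ℚ) * p := by
      exact_mod_cast congrArg (Nat.cast : ℕ → ℚ) hnat
    have hpQ : (p : ℚ) ≠ 0 := Nat.cast_ne_zero.mpr (by omega)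
    have : ((q - 1).choose (p - 1) : ℚ) / p = (q.choose p : ℚ) / q := by
      field_simp
      linarith [hcast]
    rw [this, mul_div_assoc]
  rw [Finset.sum_congr rfl hstep, ← Finset.sum_div, alt_sum_choose q hq]
end

section
/- Let A = ((a,b),(c,d)) ∈ SL(2,ℂ), let τ ∈ ℂ with cτ+d ≠ 0, set γ := (aτ+b)/(cτ+d) and σ := −c(cτ+d), and let m ≥ 1 be an integer. Let f be holomorphic on an open subset of ℂ containing γ. Then there exists ε > 0 such that for every s ∈ ℂ with |s| < ε, writing t := τ + (cτ+d)²·s, one has ct+d ≠ 0 and (ct+d)^{−m}·f((at+b)/(ct+d)) = (cτ+d)^{−m}·∑_{j=0}^{∞} ( ∑_{p+k=j, p,k≥0} C(m+j−1, k)·(f^{(p)}(γ)/p!)·σ^k ) s^j, the power series on the right converging absolutely for |s| < ε. Here C(·,·) is the binomial coefficient and f^{(p)} the p-th derivative of f. -/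
lemma aux_choose_le_two_pow (n k : ℕ) : n.choose k ≤ 2 ^ n := by
  rcases le_or_gt k n with h | h
  · calc n.choose k ≤ ∑ i ∈ Finset.range (n + 1), n.choose i :=
        Finset.single_le_sum (fun i _ => Nat.zero_le _) (Finset.mem_range.mpr (by omega))
    _ = 2 ^ n := Nat.sum_range_choose n
  · simp [Nat.choose_eq_zero_of_lt h]

/-- Taylor expansion of `(ct+d)^{-m} f((at+b)/(ct+d))` in the shifted variable
`s` with `t = τ + (cτ+d)²s`: for `f` holomorphic near `γ = (aτ+b)/(cτ+d)` there is `ε > 0`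
such that for `|s| < ε` one has `ct+d ≠ 0` and
`(ct+d)^{-m} f((at+b)/(ct+d)) = (cτ+d)^{-m} ∑_{j≥0} (∑_{p+k=j} C(m+j-1,k) (f⁽ᵖ⁾(γ)/p!) σᵏ) sʲ`,
where `σ = -c(cτ+d)`, the series converging (absolutely) for `|s| < ε`. -/
theorem sl2_taylor_expansion (a b c d : ℂ) (hA : a * d - b * c = 1)
    (τ : ℂ) (hτ : c * τ + d ≠ 0) (m : ℕ) (hm : 1 ≤ m)
    (V : Set ℂ) (hV : IsOpen V) (f : ℂ → ℂ)
    (hγ : (a * τ + b) / (c * τ + d) ∈ V) (hf : DifferentiableOn ℂ f V) :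
    ∃ ε > 0, ∀ s : ℂ, ‖s‖ < ε →
      c * (τ + (c * τ + d) ^ 2 * s) + d ≠ 0 ∧
      HasSum
        (fun j : ℕ =>
          (∑ k ∈ Finset.range (j + 1),
            (Nat.choose (m + j - 1) k : ℂ) *
              (iteratedDeriv (j - k) f ((a * τ + b) / (c * τ + d)) /
                (Nat.factorial (j - k) : ℂ)) *
              (-c * (c * τ + d)) ^ k) * s ^ j)
        ((c * τ + d) ^ m *
          (f ((a * (τ + (c * τ + d) ^ 2 * s) + b) / (c * (τ + (c * τ + d) ^ 2 * s) + d)) /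
            (c * (τ + (c * τ + d) ^ 2 * s) + d) ^ m)) := by
  set Λ : ℂ := c * τ + d with hΛdef
  set γ : ℂ := (a * τ + b) / Λ with hγdef
  set σ : ℂ := -c * Λ with hσdef
  have hΛ : Λ ≠ 0 := hτ
  set A : ℕ → ℂ := fun p => iteratedDeriv p f γ / (Nat.factorial p : ℂ) with hAdef
  obtain ⟨r, hr0, hball⟩ := Metric.isOpen_iff.mp hV γ hγ
  have hfr : DifferentiableOn ℂ f (Metric.ball γ r) := hf.mono hball
  have hTay : ∀ w : ℂ, ‖w‖ < r → HasSum (fun p => A p * w ^ p) (f (γ + w)) := by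
    intro w hw
    have hz : γ + w ∈ Metric.ball γ r := by
      rw [Metric.mem_ball, dist_eq_norm, add_sub_cancel_left]
      exact hw
    have H := Complex.hasSum_taylorSeries_on_ball hfr hz
    simp only [add_sub_cancel_left, smul_eq_mul] at H
    convert H using 2 with p
    · rfl
    simp [hAdef]
    ring
  -- uniform coefficient bound
  obtain ⟨M, hM⟩ : ∃ M : ℝ, ∀ p, ‖A p * ((r / 2 : ℝ) : ℂ) ^ p‖ ≤ M := by
    have h2 : ‖((r / 2 : ℝ) : ℂ)‖ < r := by
      simp only [Complex.norm_real, Real.norm_eq_abs, abs_of_pos (by linarith : (0:ℝ) < r / 2)]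
      linarith
    have hb := ((hTay _ h2).summable.tendsto_atTop_zero.norm).bddAbove_range
    obtain ⟨M, hM⟩ := hb
    exact ⟨M, fun p => hM (Set.mem_range_self p)⟩
  have hM0 : 0 ≤ M := le_trans (norm_nonneg _) (hM 0)
  refine ⟨min (r / 8) (1 / (2 * (‖σ‖ + 1))), by positivity, fun s hs => ?_⟩
  rw [lt_min_iff] at hs
  obtain ⟨hs1, hs2⟩ := hs
  have hs0 : 0 ≤ ‖s‖ := norm_nonneg s
  have hσs : ‖σ * s‖ < 1 / 2 := by
    rw [norm_mul]
    calc ‖σ‖ * ‖s‖ ≤ (‖σ‖ + 1) * ‖s‖ := by nlinarith [norm_nonneg σ]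
      _ < (‖σ‖ + 1) * (1 / (2 * (‖σ‖ + 1))) := by
          apply mul_lt_mul_of_pos_left hs2 (by positivity)
      _ = 1 / 2 := by field_simp
  have h1 : (1 : ℝ) / 2 ≤ ‖(1 : ℂ) - σ * s‖ := by
    have := norm_sub_norm_le (1 : ℂ) (σ * s)
    simp only [norm_one] at this
    linarith
  have hden0 : (1 : ℂ) - σ * s ≠ 0 := by
    intro h
    rw [h, norm_zero] at h1
    linarith
  have hct : c * (τ + Λ ^ 2 * s) + d = Λ * (1 - σ * s) := by
    rw [hσdef, hΛdef]; ring
  refine ⟨by rw [hct]; exact mul_ne_zero hΛ hden0, ?_⟩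
  set w : ℂ := s / (1 - σ * s) with hwdef
  have hw2 : ‖w‖ ≤ 2 * ‖s‖ := by
    rw [hwdef, norm_div, div_le_iff₀ (by linarith : (0:ℝ) < ‖1 - σ * s‖)]
    nlinarith
  have hwr : ‖w‖ < r := by linarith
  have hnum : a * (τ + Λ ^ 2 * s) + b = (a * τ + b) * (1 - σ * s) + Λ * s := by
    rw [hσdef, hΛdef]
    linear_combination ((c * τ + d) * s) * hA
  have harg : (a * (τ + Λ ^ 2 * s) + b) / (c * (τ + Λ ^ 2 * s) + d) = γ + w := by
    rw [hct, hnum, hwdef, hγdef]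
    field_simp
  have htarget : Λ ^ m *
      (f ((a * (τ + Λ ^ 2 * s) + b) / (c * (τ + Λ ^ 2 * s) + d)) /
        (c * (τ + Λ ^ 2 * s) + d) ^ m) = f (γ + w) * ((1 - σ * s) ^ m)⁻¹ := by
    rw [harg, hct, mul_pow]
    field_simp
  rw [htarget]
  -- geometric-binomial series in each fiber
  have hσs1 : ‖σ * s‖ < 1 := by linarith
  have hgeom : ∀ p : ℕ,
      HasSum (fun k : ℕ => ((k + (m + p - 1)).choose (m + p - 1) : ℂ) * (σ * s) ^ k)
        (1 / (1 - σ * s) ^ (m + p)) := by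
    intro p
    have H := hasSum_choose_mul_geometric_of_norm_lt_one (𝕜 := ℂ) (m + p - 1) hσs1
    have hmp : m + p - 1 + 1 = m + p := by omega
    rwa [hmp] at H
  set F : ℕ × ℕ → ℂ := fun pk =>
    ((m + (pk.1 + pk.2) - 1).choose pk.2 : ℂ) * A pk.1 * σ ^ pk.2 * s ^ (pk.1 + pk.2) with hFdef
  have hchoose : ∀ p k : ℕ, (m + (p + k) - 1).choose k = (k + (m + p - 1)).choose (m + p - 1) := by
    intro p k
    have h2 := (Nat.choose_symm (Nat.le_add_left (m + p - 1) k)).symm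
    rw [Nat.add_sub_cancel] at h2
    rw [show m + (p + k) - 1 = k + (m + p - 1) by omega, h2]
  have hFeq : ∀ p k : ℕ, F (p, k) =
      (A p * s ^ p) * (((k + (m + p - 1)).choose (m + p - 1) : ℂ) * (σ * s) ^ k) := by
    intro p k
    simp only [hFdef, hchoose p k, mul_pow, pow_add]
    ring
  have hg : ∀ p : ℕ, HasSum (fun k => F (p, k)) (A p * s ^ p / (1 - σ * s) ^ (m + p)) := by
    intro p
    have H := (hgeom p).mul_left (A p * s ^ p)
    simp only [← hFeq] at H
    rwa [mul_one_div] at H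
  have hterm : ∀ p : ℕ, A p * s ^ p / (1 - σ * s) ^ (m + p)
      = A p * w ^ p * ((1 - σ * s) ^ m)⁻¹ := by
    intro p
    generalize A p = x
    rw [hwdef, div_pow, pow_add]
    field_simp
  have hTsum : HasSum (fun p => A p * s ^ p / (1 - σ * s) ^ (m + p))
      (f (γ + w) * ((1 - σ * s) ^ m)⁻¹) := by
    simp only [hterm]
    exact (hTay w hwr).mul_right _
  -- summability of the double series
  have hq1 : 4 * ‖s‖ / r < 1 := by
    rw [div_lt_one hr0]; linarith
  have hq0 : 0 ≤ 4 * ‖s‖ / r := by positivity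
  have hu : Summable fun p : ℕ => ‖A p‖ * (2 * ‖s‖) ^ p := by
    refine Summable.of_nonneg_of_le (fun p => by positivity)
      (fun p => ?_) ((summable_geometric_of_lt_one hq0 hq1).mul_left M)
    have h := hM p
    have hnorm : ‖A p * ((r / 2 : ℝ) : ℂ) ^ p‖ = ‖A p‖ * (r / 2) ^ p := by
      rw [norm_mul, norm_pow, Complex.norm_real, Real.norm_eq_abs,
        abs_of_pos (by linarith : (0:ℝ) < r / 2)]
    rw [hnorm] at h
    have key : ‖A p‖ * (2 * ‖s‖) ^ p = (‖A p‖ * (r / 2) ^ p) * (4 * ‖s‖ / r) ^ p := by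
      rw [mul_assoc, ← mul_pow]
      congr 2
      field_simp
      ring
    rw [key]
    apply mul_le_mul_of_nonneg_right h (by positivity)
  have hv : Summable fun k : ℕ => (2 * ‖σ * s‖) ^ k :=
    summable_geometric_of_lt_one (by positivity) (by linarith)
  have hprod : Summable fun pk : ℕ × ℕ =>
      (2 ^ m * (‖A pk.1‖ * (2 * ‖s‖) ^ pk.1)) * (2 * ‖σ * s‖) ^ pk.2 :=
    (hu.mul_left (2 ^ m)).mul_of_nonneg hv (fun p => by positivity) (fun k => by positivity)
  have hFnorm : ∀ pk : ℕ × ℕ, ‖F pk‖ ≤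
      (2 ^ m * (‖A pk.1‖ * (2 * ‖s‖) ^ pk.1)) * (2 * ‖σ * s‖) ^ pk.2 := by
    rintro ⟨p, k⟩
    have hC : ((m + (p + k) - 1).choose k : ℝ) ≤ 2 ^ (m + p + k) := by
      have h1 : (m + (p + k) - 1).choose k ≤ 2 ^ (m + (p + k) - 1) :=
        aux_choose_le_two_pow _ _
      have h2 : (2 : ℕ) ^ (m + (p + k) - 1) ≤ 2 ^ (m + p + k) :=
        Nat.pow_le_pow_right (by norm_num) (by omega)
      exact_mod_cast le_trans h1 h2
    have hexp : ‖F (p, k)‖ =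
        ((m + (p + k) - 1).choose k : ℝ) * ‖A p‖ * ‖σ‖ ^ k * ‖s‖ ^ (p + k) := by
      simp [hFdef, norm_mul, norm_pow]
    rw [hexp]
    have hrhs : (2 ^ m * (‖A p‖ * (2 * ‖s‖) ^ p)) * (2 * ‖σ * s‖) ^ k
        = (2 : ℝ) ^ (m + p + k) * ‖A p‖ * ‖σ‖ ^ k * ‖s‖ ^ (p + k) := by
      rw [norm_mul]
      rw [pow_add, pow_add, mul_pow, mul_pow, pow_add]
      ring
    rw [hrhs]
    have hA0 : 0 ≤ ‖A p‖ := norm_nonneg _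
    have hσ0 : 0 ≤ ‖σ‖ ^ k := by positivity
    have hs0' : 0 ≤ ‖s‖ ^ (p + k) := by positivity
    apply mul_le_mul_of_nonneg_right _ hs0'
    apply mul_le_mul_of_nonneg_right _ hσ0
    exact mul_le_mul_of_nonneg_right hC hA0
  have hFsum : Summable F :=
    Summable.of_norm (Summable.of_nonneg_of_le (fun _ => norm_nonneg _) hFnorm hprod)
  have hFS : HasSum F (f (γ + w) * ((1 - σ * s) ^ m)⁻¹) := by
    have h1 := hFsum.hasSum
    have h2 : HasSum (fun p => A p * s ^ p / (1 - σ * s) ^ (m + p)) (∑' pk, F pk) :=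
      h1.prod_fiberwise hg
    rwa [h2.unique hTsum] at h1
  have hdiag : HasSum (fun j => ∑ x ∈ Finset.HasAntidiagonal.antidiagonal j, F x)
      (f (γ + w) * ((1 - σ * s) ^ m)⁻¹) := by
    have he : HasSum (F ∘ Finset.HasAntidiagonal.sigmaAntidiagonalEquivProd)
        (f (γ + w) * ((1 - σ * s) ^ m)⁻¹) :=
      (Finset.HasAntidiagonal.sigmaAntidiagonalEquivProd.hasSum_iff).mpr hFS
    refine he.sigma fun n => ?_
    have hfin := hasSum_fintype
      (fun x : (Finset.HasAntidiagonal.antidiagonal n : Finset (ℕ × ℕ)) => F ↑x)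
    simpa [Finset.sum_attach] using hfin
  have hterm2 : ∀ j : ℕ, ∑ x ∈ Finset.HasAntidiagonal.antidiagonal j, F x =
      (∑ k ∈ Finset.range (j + 1),
        (Nat.choose (m + j - 1) k : ℂ) * A (j - k) * σ ^ k) * s ^ j := by
    intro j
    rw [Finset.Nat.sum_antidiagonal_eq_sum_range_succ_mk, Finset.sum_mul,
      ← Finset.sum_range_reflect]
    apply Finset.sum_congr rfl
    intro k hk
    simp only [Finset.mem_range] at hk
    have h1 : j + 1 - 1 - k = j - k := by omega
    have h2 : j - (j - k) = k := by omega
    have h3 : j - k + k = j := by omega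
    rw [h1, h2]
    simp only [hFdef, h3]
  have hfinal : ∀ j : ℕ,
      (∑ k ∈ Finset.range (j + 1),
        (Nat.choose (m + j - 1) k : ℂ) * (iteratedDeriv (j - k) f γ /
          (Nat.factorial (j - k) : ℂ)) * σ ^ k) * s ^ j
      = ∑ x ∈ Finset.HasAntidiagonal.antidiagonal j, F x := by
    intro j
    rw [hterm2 j]
  simp only [hfinal]
  exact hdiag
end
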